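/- arXiv:1202.5958 — 2 statements merged into one kernel-verified Lean document; each statement's English description precedes it below -/
import Mathlib

section
/- Let k be a field of characteristic 0, A an associative k-algebra (not necessarily unital), and let TA = ⊕_{m≥1} A^{⊗m} be the non-unital tensor algebra of A with concatenation product. For x, y ∈ A set ω(x,y) = x ⊗ y − xy ∈ A^{⊗2} ⊕ A ⊆ TA. Define a k-linear map α from Ω^{ev}A = ⊕_{n≥0} Ω^{2n}A to TA by: α(a) = a for a ∈ Ω⁰A = A, and for n ≥ 1, α((a,λ) ⊗ a₁ ⊗ … ⊗ a₂ₙ) = a · π + λ π where π = ω(a₁,a₂) · ω(a₃,a₄) ⋯ ω(a₂ₙ₋₁,a₂ₙ) (products taken in TA). Then α is a k-linear bijection from Ω^{ev}A onto TA. -/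
/-!
STATEMENT 3: Let `k` be a field of characteristic 0 and `A` an associative
`k`-algebra (not necessarily unital).  Let `TA = ⊕_{m≥1} A^{⊗m}` be the
non-unital tensor algebra of `A` with the concatenation product.  For
`x, y ∈ A` set `ω(x,y) = x ⊗ y − x*y`.  The map
`α : Ω^{ev}A → TA` given by `α(a) = a` on `Ω⁰A = A` and
`α((a,λ) ⊗ a₁ ⊗ … ⊗ a₂ₙ) = a·π + λ·π`, with
`π = ω(a₁,a₂) ⋯ ω(a₂ₙ₋₁,a₂ₙ)`, is a `k`-linear bijection.

The non-unital tensor algebra is formalized as any non-unital `k`-algebra `T`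
with a `k`-linear identification `T ≃ ⊕_{m≥0} A^{⊗(m+1)}` under which the
product is concatenation of elementary tensors; the even forms are
`Ω^{ev}A = A × ⊕_{n≥0} (Ã ⊗ A^{⊗(2n+2)})` (`Ã = Unitization k A`), and `α` is
any `k`-linear map satisfying the defining formula on elementary tensors.
-/

open scoped TensorProduct DirectSum
open TensorProduct PiTensorProduct

variable {T : Type}

/-- The ordered product `f 0 * f 1 * ⋯ * f n` in a non-unital ring. -/
def chainProd [NonUnitalRing T] (f : ℕ → T) : ℕ → T
  | 0 => f 0
  | (n + 1) => chainProd f n * f (n + 1)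

set_option linter.unusedSectionVars false
set_option linter.unreachableTactic false
set_option linter.unusedTactic false
set_option synthInstance.maxHeartbeats 1000000
set_option maxHeartbeats 1000000
noncomputable section




section Aux
variable {k A T : Type} [Field k] [NonUnitalRing A] [Module k A]
  [SMulCommClass k A A] [IsScalarTower k A A]
  [NonUnitalRing T] [Module k T] [SMulCommClass k T T] [IsScalarTower k T T]

/-- elements of the direct sum supported in degrees `≤ m` -/
def Dle (k A : Type) [Field k] [NonUnitalRing A] [Module k A] (m : ℕ) :
    Submodule k (⨁ (m : ℕ), ⨂[k] (_ : Fin (m + 1)), A) where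
  carrier := {x | ∀ j, m < j → x j = 0}
  add_mem' := by
    intro x y hx hy j hj
    rw [DirectSum.add_apply, hx j hj, hy j hj, add_zero]
  zero_mem' := by intro j hj; rfl
  smul_mem' := by
    intro c x hx j hj
    rw [DFinsupp.smul_apply, hx j hj, smul_zero]

variable (eT : T ≃ₗ[k] ⨁ (m : ℕ), ⨂[k] (_ : Fin (m + 1)), A)

/-- elements of `T` of degree `≤ m` -/
def Fle (m : ℕ) : Submodule k T := (Dle k A m).comap (eT : T →ₗ[k] _)

lemma mem_Fle {m : ℕ} {t : T} : t ∈ Fle eT m ↔ ∀ j, m < j → eT t j = 0 := Iff.rfl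

lemma Fle_mono {m m' : ℕ} (h : m ≤ m') : Fle eT m ≤ Fle (A := A) eT m' := by
  intro t ht j hj
  exact ht j (lt_of_le_of_lt h hj)

lemma symm_of_mem_Fle {p m : ℕ} (h : p ≤ m) (t : ⨂[k] (_ : Fin (p + 1)), A) :
    eT.symm (DirectSum.of (fun m => ⨂[k] (_ : Fin (m + 1)), A) p t) ∈ Fle eT m := by
  intro j hj
  have : eT (eT.symm (DirectSum.of (fun m => ⨂[k] (_ : Fin (m + 1)), A) p t)) =
      DirectSum.of (fun m => ⨂[k] (_ : Fin (m + 1)), A) p t := eT.apply_symm_apply _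
  show (eT (eT.symm _) : _) j = 0
  rw [this]
  exact DirectSum.of_eq_of_ne _ _ _ (by omega)

/-- every element of fixed degree bound is in the span of images of pure tensors -/
lemma of_mem_span_pure {m j : ℕ} (hj : j ≤ m) (t : ⨂[k] (_ : Fin (j + 1)), A) :
    eT.symm (DirectSum.of (fun m => ⨂[k] (_ : Fin (m + 1)), A) j t)
      ∈ Submodule.span k {u : T | ∃ j ≤ m, ∃ f : Fin (j+1) → A,
      u = eT.symm (DirectSum.of (fun m => ⨂[k] (_ : Fin (m + 1)), A) j (tprod k f))} := by
  have htop : t ∈ Submodule.span k (Set.range (tprod k (s := fun _ : Fin (j+1) => A))) := by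
    rw [PiTensorProduct.span_tprod_eq_top]; trivial
  induction htop using Submodule.span_induction with
  | mem u hu =>
      obtain ⟨f, rfl⟩ := hu
      exact Submodule.subset_span ⟨j, hj, f, rfl⟩
  | zero => rw [map_zero, map_zero]; exact Submodule.zero_mem _
  | add u v _ _ hu hv => rw [map_add, map_add]; exact Submodule.add_mem _ hu hv
  | smul c u _ hu =>
      have hsm : (DirectSum.of (fun m => ⨂[k] (_ : Fin (m + 1)), A) j) (c • u)
          = c • (DirectSum.of (fun m => ⨂[k] (_ : Fin (m + 1)), A) j) u := by
        rw [← DirectSum.lof_eq_of k, ← DirectSum.lof_eq_of k, map_smul]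
      rw [hsm, map_smul]
      exact Submodule.smul_mem _ _ hu

lemma symm_mem_span_pure : ∀ (m : ℕ) (x : ⨁ (m : ℕ), ⨂[k] (_ : Fin (m + 1)), A),
    (∀ j, m < j → x j = 0) →
    eT.symm x ∈ Submodule.span k {u : T | ∃ j ≤ m, ∃ f : Fin (j+1) → A,
      u = eT.symm (DirectSum.of (fun m => ⨂[k] (_ : Fin (m + 1)), A) j (tprod k f))} := by
  intro m
  induction m with
  | zero =>
      intro x hx
      have : x = DirectSum.of (fun m => ⨂[k] (_ : Fin (m + 1)), A) 0 (x 0) := by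
        apply DFinsupp.ext; intro j
        rcases Nat.eq_zero_or_pos j with rfl | hj
        · exact (DirectSum.of_eq_same (β := fun m => ⨂[k] (_ : Fin (m + 1)), A) 0 (x 0)).symm
        · rw [hx j hj, DirectSum.of_eq_of_ne _ _ _ (by omega)]
      rw [this]
      exact of_mem_span_pure eT le_rfl _
  | succ m ih =>
      intro x hx
      have hdec : x = (x - DirectSum.of (fun m => ⨂[k] (_ : Fin (m + 1)), A) (m+1) (x (m+1)))
          + DirectSum.of (fun m => ⨂[k] (_ : Fin (m + 1)), A) (m+1) (x (m+1)) := (sub_add_cancel x _).symm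
      rw [hdec, map_add]
      apply Submodule.add_mem
      · have h1 : ∀ j, m < j →
            (x - DirectSum.of (fun m => ⨂[k] (_ : Fin (m + 1)), A) (m+1) (x (m+1))) j = 0 := by
          intro j hj
          rcases Nat.lt_or_ge (m+1) j with h | h
          · rw [DFinsupp.sub_apply, hx j h, DirectSum.of_eq_of_ne _ _ _ (by omega), sub_zero]
          · have : j = m + 1 := by omega
            subst this
            rw [DFinsupp.sub_apply, DirectSum.of_eq_same, sub_self]
        refine Submodule.span_mono ?_ (ih _ h1)
        rintro u ⟨j, hj, f, rfl⟩
        exact ⟨j, by omega, f, rfl⟩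
      · exact of_mem_span_pure eT le_rfl _

lemma mem_span_pure {m : ℕ} {t : T} (ht : t ∈ Fle eT m) :
    t ∈ Submodule.span k {u : T | ∃ j ≤ m, ∃ f : Fin (j+1) → A,
      u = eT.symm (DirectSum.of (fun m => ⨂[k] (_ : Fin (m + 1)), A) j (tprod k f))} := by
  have := symm_mem_span_pure eT m (eT t) ht
  rwa [eT.symm_apply_apply] at this

/-- extend a function on `Fin r` to `ℕ` -/
lemma exists_nat_ext {r : ℕ} (f : Fin r → A) : ∃ a : ℕ → A, f = fun i : Fin r => a (i : ℕ) := by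
  refine ⟨fun j => if h : j < r then f ⟨j, h⟩ else 0, ?_⟩
  funext i
  simp [i.isLt]


lemma tprodCongr' {r : ℕ} {f g : Fin r → A} (h : ∀ i, f i = g i) :
    tprod k f = tprod k g := by rw [funext h]

lemma of_index_congr {p p' : ℕ} (h : p = p') (f : Fin (p+1) → A) (g : Fin (p'+1) → A)
    (hfg : ∀ (i : ℕ) (hi : i < p+1) (hi' : i < p'+1), f ⟨i, hi⟩ = g ⟨i, hi'⟩) :
    DirectSum.of (fun m => ⨂[k] (_ : Fin (m + 1)), A) p (tprod k f)
      = DirectSum.of (fun m => ⨂[k] (_ : Fin (m + 1)), A) p' (tprod k g) := by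
  subst h
  exact congrArg _ (tprodCongr' fun i => hfg (i : ℕ) i.isLt i.isLt)

instance : Subsingleton (Fin (0+1)) := ⟨fun a b => Fin.ext (by omega)⟩

/-- prepending a factor to a pi tensor product, as a linear equivalence -/
def consEquiv (r : ℕ) : (A ⊗[k] (⨂[k] (_ : Fin r), A)) ≃ₗ[k] ⨂[k] (_ : Fin (r+1)), A :=
  (TensorProduct.congr
      (PiTensorProduct.subsingletonEquiv (R := k) (s := fun _ => A) (0 : Fin 1)).symm
      (LinearEquiv.refl k _)).trans
    ((PiTensorProduct.tmulEquiv k A).trans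
      (PiTensorProduct.reindex k (fun _ => A)
        ((finSumFinEquiv (m := 1) (n := r)).trans (finCongr (by omega)))))

lemma consEquiv_tprod (r : ℕ) (b : A) (f : Fin r → A) :
    consEquiv (k := k) r (b ⊗ₜ[k] tprod k f) = tprod k (Fin.cases b f) := by
  have hsub : (PiTensorProduct.subsingletonEquiv (R := k) (s := fun _ => A) (0 : Fin 1)).symm b
      = tprod k (fun _ : Fin 1 => b) := by
    rw [LinearEquiv.symm_apply_eq, subsingletonEquiv_apply_tprod]
  rw [consEquiv, LinearEquiv.trans_apply, TensorProduct.congr_tmul, hsub,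
    LinearEquiv.refl_apply, LinearEquiv.trans_apply, PiTensorProduct.tmulEquiv_apply,
    PiTensorProduct.reindex_tprod]
  congr 1
  funext i
  set e : (Fin 1 ⊕ Fin r) ≃ Fin (r+1) :=
    (finSumFinEquiv (m := 1) (n := r)).trans (finCongr (by omega)) with he
  induction i using Fin.cases with
  | zero =>
      have h0 : e.symm 0 = Sum.inl 0 := by
        rw [Equiv.symm_apply_eq]
        apply Fin.ext
        simp [he, finCongr_apply] <;> omega
      rw [h0]
      simp
  | succ j =>
      have hj : e.symm j.succ = Sum.inr j := by
        rw [Equiv.symm_apply_eq]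
        apply Fin.ext
        simp [he, finCongr_apply] <;> omega
      rw [hj]
      simp

/-- the first-coordinate projection of the unitization, as a linear map -/
def fstL : Unitization k A →ₗ[k] k where
  toFun := fun x => x.fst
  map_add' := Unitization.fst_add
  map_smul' := Unitization.fst_smul

lemma unit_split {V : Type} [AddCommGroup V] [Module k V]
    (z : Unitization k A ⊗[k] V) :
    z = (1 : Unitization k A) ⊗ₜ[k]
          (TensorProduct.lid k V ((TensorProduct.map fstL LinearMap.id) z))
        + (TensorProduct.map (Unitization.inrHom k k A) LinearMap.id)
            ((TensorProduct.map (Unitization.sndHom k k A) LinearMap.id) z) := by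
  induction z using TensorProduct.induction_on with
  | zero => simp
  | tmul x v =>
      rw [TensorProduct.map_tmul, TensorProduct.map_tmul, TensorProduct.map_tmul]
      simp only [LinearMap.id_coe, id_eq, TensorProduct.lid_tmul]
      have h1 : (1 : Unitization k A) ⊗ₜ[k] (fstL x • v)
          = Unitization.inl (R := k) (A := A) x.fst ⊗ₜ[k] v := by
        rw [tmul_smul, smul_tmul']
        congr 1
        show fstL x • (1 : Unitization k A) = _
        refine Unitization.ext ?_ ?_ <;> simp [fstL, Unitization.fst_smul, Unitization.snd_smul]
      rw [h1]
      have h2 : Unitization.sndHom k k A x = x.snd := rfl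
      have h3 : Unitization.inrHom k k A x.snd = Unitization.inr x.snd := rfl
      rw [h2, h3, ← TensorProduct.add_tmul, Unitization.inl_fst_add_inr_snd_eq]
  | add z w hz hw =>
      simp only [map_add, TensorProduct.tmul_add]
      conv_lhs => rw [hz, hw]
      abel

variable (hmul : ∀ (p q : ℕ) (a c : ℕ → A),
      eT.symm (DirectSum.of (fun m => ⨂[k] (_ : Fin (m + 1)), A) p
          (⨂ₜ[k] (i : Fin (p + 1)), a i))
        * eT.symm (DirectSum.of (fun m => ⨂[k] (_ : Fin (m + 1)), A) q
          (⨂ₜ[k] (i : Fin (q + 1)), c i))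
      = eT.symm (DirectSum.of (fun m => ⨂[k] (_ : Fin (m + 1)), A) (p + q + 1)
          (⨂ₜ[k] (i : Fin (p + q + 2)),
            (if (i : ℕ) ≤ p then a i else c ((i : ℕ) - (p + 1))))))

include hmul

lemma Fle_mul {p q : ℕ} {u v : T} (hu : u ∈ Fle eT p) (hv : v ∈ Fle eT q) :
    u * v ∈ Fle eT (p + q + 1) := by
  have hu' := mem_span_pure eT hu
  have hv' := mem_span_pure eT hv
  clear hu hv
  induction hu' using Submodule.span_induction with
  | mem u hu =>
      obtain ⟨j, hj, f, rfl⟩ := hu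
      induction hv' using Submodule.span_induction with
      | mem v hv =>
          obtain ⟨j', hj', f', rfl⟩ := hv
          obtain ⟨a, rfl⟩ := exists_nat_ext f
          obtain ⟨c, rfl⟩ := exists_nat_ext f'
          rw [hmul j j' a c]
          exact symm_of_mem_Fle eT (by omega) _
      | zero => rw [mul_zero]; exact Submodule.zero_mem _
      | add v w _ _ h1 h2 => rw [mul_add]; exact Submodule.add_mem _ h1 h2
      | smul c v _ h1 => rw [mul_smul_comm]; exact Submodule.smul_mem _ _ h1
  | zero => rw [zero_mul]; exact Submodule.zero_mem _
  | add u w _ _ h1 h2 => rw [add_mul]; exact Submodule.add_mem _ h1 h2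
  | smul c u _ h1 => rw [smul_mul_assoc]; exact Submodule.smul_mem _ _ h1

variable (ι : A → T)
variable (hι : ∀ a : A, ι a = eT.symm (DirectSum.of (fun m => ⨂[k] (_ : Fin (m + 1)), A) 0
        (⨂ₜ[k] (_ : Fin 1), a)))

include hι

lemma hι' (b : ℕ → A) :
    ι (b 0) = eT.symm (DirectSum.of (fun m => ⨂[k] (_ : Fin (m + 1)), A) 0
      (⨂ₜ[k] (i : Fin 1), b (i : ℕ))) := by
  rw [hι]
  congr 1
  congr 1
  exact tprodCongr' fun i => congrArg b (show (0:ℕ) = (i:ℕ) by have := i.isLt; omega)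

lemma iota_mem_Fle (b : A) : ι b ∈ Fle eT 0 := by
  rw [hι]; exact symm_of_mem_Fle eT le_rfl _

lemma hι0 : ι (0 : A) = 0 := by
  have hz : (PiTensorProduct.tprod k) (fun _ : Fin 1 => (0 : A)) = 0 :=
    MultilinearMap.map_coord_zero _ (0 : Fin 1) rfl
  rw [hι 0, hz, map_zero, map_zero]

/-- `ι x * ι y` is the degree-2 pure tensor. -/
lemma iota_mul (b : ℕ → A) :
    ι (b 0) * ι (b 1)
      = eT.symm (DirectSum.of (fun m => ⨂[k] (_ : Fin (m + 1)), A) 1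
        (⨂ₜ[k] (i : Fin 2), b (i : ℕ))) := by
  rw [hι' eT hmul ι hι b, hι' eT hmul ι hι (fun j => b (j + 1)), hmul 0 0 b (fun j => b (j + 1))]
  congr 2
  exact tprodCongr' fun i => by
    by_cases h : (i : ℕ) ≤ 0
    · rw [if_pos h]
    · rw [if_neg h]; exact congrArg b (by omega)

/-- Lemma π : the chain product of the `ω`'s is the top pure tensor plus lower terms. -/
lemma chain_eq_top_add_lower (n : ℕ) (a : ℕ → A) :
    chainProd (fun j => ι (a (2*j)) * ι (a (2*j+1)) - ι (a (2*j) * a (2*j+1))) n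
      - eT.symm (DirectSum.of (fun m => ⨂[k] (_ : Fin (m + 1)), A) (2*n+1)
          (⨂ₜ[k] (i : Fin (2*n+2)), a (i : ℕ)))
      ∈ Fle eT (2*n) := by
  induction n with
  | zero =>
      have h0 : chainProd (fun j => ι (a (2*j)) * ι (a (2*j+1)) - ι (a (2*j) * a (2*j+1))) 0
          = ι (a 0) * ι (a 1) - ι (a 0 * a 1) := rfl
      rw [h0, iota_mul eT hmul ι hι a]
      have hXY : eT.symm (DirectSum.of (fun m => ⨂[k] (_ : Fin (m + 1)), A) (2*0+1)
            (⨂ₜ[k] (i : Fin (2*0+2)), a (i : ℕ)))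
          = eT.symm (DirectSum.of (fun m => ⨂[k] (_ : Fin (m + 1)), A) 1
            (⨂ₜ[k] (i : Fin 2), a (i : ℕ))) := rfl
      rw [hXY, sub_sub_cancel_left]
      exact Submodule.neg_mem _ (iota_mem_Fle eT hmul ι hι _)
  | succ n ih =>
      set f := fun j => ι (a (2*j)) * ι (a (2*j+1)) - ι (a (2*j) * a (2*j+1)) with hf
      set Tn := eT.symm (DirectSum.of (fun m => ⨂[k] (_ : Fin (m + 1)), A) (2*n+1)
          (⨂ₜ[k] (i : Fin (2*n+2)), a (i : ℕ))) with hTn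
      set r := chainProd f n - Tn with hr
      set P1 := eT.symm (DirectSum.of (fun m => ⨂[k] (_ : Fin (m + 1)), A) 1
          (⨂ₜ[k] (i : Fin 2), a (2*n+2 + (i : ℕ)))) with hP1
      set s := ι (a (2*n+2) * a (2*n+3)) with hs
      have hstep : chainProd f (n+1) = (Tn + r) * (P1 - s) := by
        have h1 : chainProd f (n+1) = chainProd f n * f (n+1) := rfl
        have h2 : f (n+1) = P1 - s := by
          have hb : ι (a (2*(n+1))) * ι (a (2*(n+1)+1)) = P1 :=
            iota_mul eT hmul ι hι (fun j => a (2*n+2+j))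
          show ι (a (2*(n+1))) * ι (a (2*(n+1)+1)) - ι (a (2*(n+1)) * a (2*(n+1)+1)) = P1 - s
          rw [hb]
          rfl
        have hTnr : Tn + r = chainProd f n := by rw [hr, add_comm, sub_add_cancel]
        rw [hTnr, ← h2]
        exact h1
      have key : Tn * P1 = eT.symm (DirectSum.of (fun m => ⨂[k] (_ : Fin (m + 1)), A)
          (2*(n+1)+1) (⨂ₜ[k] (i : Fin (2*(n+1)+2)), a (i : ℕ))) := by
        rw [hTn, hP1, hmul (2*n+1) 1 a (fun j => a (2*n+2+j))]
        congr 2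
        exact tprodCongr' fun i => by
          by_cases h : (i : ℕ) ≤ 2*n+1
          · rw [if_pos h]
          · rw [if_neg h]; exact congrArg a (by omega)
      have hexp : chainProd f (n+1)
            - eT.symm (DirectSum.of (fun m => ⨂[k] (_ : Fin (m + 1)), A)
              (2*(n+1)+1) (⨂ₜ[k] (i : Fin (2*(n+1)+2)), a (i : ℕ)))
          = -(Tn * s) + r * P1 + -(r * s) := by
        rw [hstep, ← key]
        noncomm_ring
      rw [hexp]
      have m1 : Tn * s ∈ Fle eT (2*n+2) :=
        Fle_mul eT hmul (p := 2*n+1) (q := 0) (symm_of_mem_Fle eT le_rfl _)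
          (iota_mem_Fle eT hmul ι hι _)
      have m2 : r * P1 ∈ Fle eT (2*n+2) :=
        Fle_mul eT hmul (p := 2*n) (q := 1) ih (symm_of_mem_Fle eT le_rfl _)
      have m3 : r * s ∈ Fle eT (2*n+2) :=
        Fle_mono eT (by omega) (Fle_mul eT hmul (p := 2*n) (q := 0) ih
          (iota_mem_Fle eT hmul ι hι _))
      exact Submodule.add_mem _ (Submodule.add_mem _ (Submodule.neg_mem _ m1) m2)
        (Submodule.neg_mem _ m3)





section Alpha

set_option maxHeartbeats 1000000

variable (α : (A × ⨁ (n : ℕ), (Unitization k A ⊗[k] (⨂[k] (_ : Fin (2 * n + 2)), A))) →ₗ[k] T)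

omit hmul hι

/-- `w ↦ α (0, w)` as a linear map -/
def alphaPair : (⨁ (n : ℕ), (Unitization k A ⊗[k] (⨂[k] (_ : Fin (2 * n + 2)), A))) →ₗ[k] T :=
  α.comp (LinearMap.prod (0 : (⨁ (n : ℕ), (Unitization k A ⊗[k] (⨂[k] (_ : Fin (2 * n + 2)), A))) →ₗ[k] A)
    LinearMap.id)

lemma alphaPair_apply (w : ⨁ (n : ℕ), (Unitization k A ⊗[k] (⨂[k] (_ : Fin (2 * n + 2)), A))) :
    alphaPair α w = α (0, w) := rfl

/-- `z ↦ α (0, of n z)` as a linear map -/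
def alphaOf (n : ℕ) : (Unitization k A ⊗[k] (⨂[k] (_ : Fin (2 * n + 2)), A)) →ₗ[k] T :=
  (alphaPair α).comp
    (DirectSum.lof k ℕ (fun n => Unitization k A ⊗[k] (⨂[k] (_ : Fin (2 * n + 2)), A)) n)

lemma alphaOf_apply (n : ℕ) (z : Unitization k A ⊗[k] (⨂[k] (_ : Fin (2 * n + 2)), A)) :
    alphaOf α n z
      = α (0, DirectSum.of (fun n => Unitization k A ⊗[k] (⨂[k] (_ : Fin (2 * n + 2)), A)) n z) := by
  rw [alphaOf, LinearMap.comp_apply, DirectSum.lof_eq_of, alphaPair_apply]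

lemma of_smul'' {β : ℕ → Type} [∀ i, AddCommGroup (β i)] [∀ i, Module k (β i)]
    (n : ℕ) (c : k) (z : β n) :
    DirectSum.of β n (c • z) = c • DirectSum.of β n z := by
  rw [← DirectSum.lof_eq_of k, ← DirectSum.lof_eq_of k, map_smul]

lemma exists_bound {β : ℕ → Type} [∀ i, AddCommGroup (β i)] (x : ⨁ i, β i) :
    ∃ m : ℕ, ∀ j, m ≤ j → x j = 0 := by
  induction x using DirectSum.induction_on with
  | zero => exact ⟨0, fun j _ => rfl⟩
  | of i b => exact ⟨i + 1, fun j hj => DirectSum.of_eq_of_ne _ _ _ (by omega)⟩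
  | add x y hx hy =>
      obtain ⟨m, hm⟩ := hx
      obtain ⟨m', hm'⟩ := hy
      exact ⟨max m m', fun j hj => by
        rw [DirectSum.add_apply, hm j (by omega), hm' j (by omega), add_zero]⟩

include hmul hι

lemma chain_mem_Fle (n : ℕ) (a : ℕ → A) :
    chainProd (fun j => ι (a (2*j)) * ι (a (2*j+1)) - ι (a (2*j) * a (2*j+1))) n
      ∈ Fle eT (2*n+1) := by
  have h := chain_eq_top_add_lower eT hmul ι hι n a
  have hdec : chainProd (fun j => ι (a (2*j)) * ι (a (2*j+1)) - ι (a (2*j) * a (2*j+1))) n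
      = (chainProd (fun j => ι (a (2*j)) * ι (a (2*j+1)) - ι (a (2*j) * a (2*j+1))) n
        - eT.symm (DirectSum.of (fun m => ⨂[k] (_ : Fin (m + 1)), A) (2*n+1)
          (⨂ₜ[k] (i : Fin (2*n+2)), a (i : ℕ))))
        + eT.symm (DirectSum.of (fun m => ⨂[k] (_ : Fin (m + 1)), A) (2*n+1)
          (⨂ₜ[k] (i : Fin (2*n+2)), a (i : ℕ))) := by
    rw [sub_add_cancel]
  rw [hdec]
  exact Submodule.add_mem _ (Fle_mono eT (by omega) h) (symm_of_mem_Fle eT le_rfl _)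

variable (hα : ∀ (n : ℕ) (x : Unitization k A) (a : ℕ → A),
      α (0, DirectSum.of (fun n => Unitization k A ⊗[k] (⨂[k] (_ : Fin (2 * n + 2)), A)) n
          (x ⊗ₜ[k] (⨂ₜ[k] (i : Fin (2 * n + 2)), a i)))
        = ι x.snd * chainProd
              (fun j => ι (a (2 * j)) * ι (a (2 * j + 1)) - ι (a (2 * j) * a (2 * j + 1)))
              n
          + x.fst • chainProd
              (fun j => ι (a (2 * j)) * ι (a (2 * j + 1)) - ι (a (2 * j) * a (2 * j + 1)))
              n)

include hα

/-- `α` applied to the `n`-th summand lands in degrees `≤ 2n+2`. -/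
lemma alpha_of_mem_Fle (n : ℕ)
    (z : Unitization k A ⊗[k] (⨂[k] (_ : Fin (2 * n + 2)), A)) :
    alphaOf α n z ∈ Fle eT (2*n+2) := by
  have hz : z ∈ (⊤ : Submodule k _) := trivial
  rw [← TensorProduct.span_tmul_eq_top] at hz
  induction hz using Submodule.span_induction with
  | mem t ht =>
      obtain ⟨x, v, rfl⟩ := ht
      have hv : v ∈ (⊤ : Submodule k _) := trivial
      rw [← PiTensorProduct.span_tprod_eq_top] at hv
      induction hv using Submodule.span_induction with
      | mem u hu =>
          obtain ⟨f, rfl⟩ := hu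
          obtain ⟨a, rfl⟩ := exists_nat_ext f
          rw [alphaOf_apply, hα n x a]
          have hC := chain_mem_Fle eT hmul ι hι n a
          refine Submodule.add_mem _ ?_ ?_
          · exact Fle_mono eT (by omega) (Fle_mul eT hmul (p := 0) (q := 2*n+1)
              (iota_mem_Fle eT hmul ι hι _) hC)
          · exact Submodule.smul_mem _ _ (Fle_mono eT (by omega) hC)
      | zero => rw [tmul_zero, map_zero]; exact Submodule.zero_mem _
      | add u v _ _ h1 h2 => rw [tmul_add, map_add]; exact Submodule.add_mem _ h1 h2
      | smul c u _ h1 => rw [tmul_smul, map_smul]; exact Submodule.smul_mem _ _ h1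
  | zero => rw [map_zero]; exact Submodule.zero_mem _
  | add u v _ _ h1 h2 => rw [map_add]; exact Submodule.add_mem _ h1 h2
  | smul c u _ h1 => rw [map_smul]; exact Submodule.smul_mem _ _ h1

/-- `α` applied to a sum supported below `N` lands in degrees `≤ 2N`. -/
lemma alpha_sum_mem_Fle :
    ∀ (N : ℕ) (w : ⨁ (n : ℕ), (Unitization k A ⊗[k] (⨂[k] (_ : Fin (2 * n + 2)), A))),
    (∀ n, N ≤ n → w n = 0) → alphaPair α w ∈ Fle eT (2*N) := by
  intro N
  induction N with
  | zero =>
      intro w hw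
      have : w = 0 := DFinsupp.ext fun n => hw n (Nat.zero_le n)
      rw [this, map_zero]
      exact Submodule.zero_mem _
  | succ N ih =>
      intro w hw
      have hsplit : w = (w - DirectSum.of
            (fun n => Unitization k A ⊗[k] (⨂[k] (_ : Fin (2 * n + 2)), A)) N (w N))
          + DirectSum.of (fun n => Unitization k A ⊗[k] (⨂[k] (_ : Fin (2 * n + 2)), A)) N (w N) := by
        rw [sub_add_cancel]
      rw [hsplit, map_add]
      refine Submodule.add_mem _ ?_ ?_
      · refine Fle_mono eT (by omega) (ih _ ?_)
        intro n hn
        rcases Nat.lt_or_ge N n with h | h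
        · rw [DFinsupp.sub_apply, hw n (by omega), DirectSum.of_eq_of_ne _ _ _ (by omega),
            sub_zero]
        · have : n = N := by omega
          subst this
          rw [DFinsupp.sub_apply, DirectSum.of_eq_same, sub_self]
      · have := alpha_of_mem_Fle eT hmul ι hι α hα N (w N)
        rwa [alphaOf_apply, ← alphaPair_apply] at this


/-- Claim 2: the degree-`2n+1` component of `α (0, of n (1 ⊗ u))` is `u`. -/
lemma claim2 (n : ℕ) (u : ⨂[k] (_ : Fin (2*n+2)), A) :
    eT (alphaOf α n ((1 : Unitization k A) ⊗ₜ[k] u)) (2*n+1) = u := by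
  have hu : u ∈ (⊤ : Submodule k _) := trivial
  rw [← PiTensorProduct.span_tprod_eq_top] at hu
  induction hu using Submodule.span_induction with
  | mem u hu =>
      obtain ⟨f, rfl⟩ := hu
      obtain ⟨a, rfl⟩ := exists_nat_ext f
      rw [alphaOf_apply, hα n 1 a, Unitization.snd_one, Unitization.fst_one,
        hι0 eT hmul ι hι, zero_mul, zero_add, one_smul]
      have hπ := chain_eq_top_add_lower eT hmul ι hι n a
      have hd : chainProd (fun j => ι (a (2*j)) * ι (a (2*j+1)) - ι (a (2*j) * a (2*j+1))) n
          = (chainProd (fun j => ι (a (2*j)) * ι (a (2*j+1)) - ι (a (2*j) * a (2*j+1))) n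
            - eT.symm (DirectSum.of (fun m => ⨂[k] (_ : Fin (m + 1)), A) (2*n+1)
              (⨂ₜ[k] (i : Fin (2*n+2)), a (i : ℕ))))
            + eT.symm (DirectSum.of (fun m => ⨂[k] (_ : Fin (m + 1)), A) (2*n+1)
              (⨂ₜ[k] (i : Fin (2*n+2)), a (i : ℕ))) := by
        rw [sub_add_cancel]
      rw [hd, map_add, DirectSum.add_apply, eT.apply_symm_apply, DirectSum.of_eq_same,
        show eT (chainProd (fun j => ι (a (2*j)) * ι (a (2*j+1)) - ι (a (2*j) * a (2*j+1))) n
            - eT.symm (DirectSum.of (fun m => ⨂[k] (_ : Fin (m + 1)), A) (2*n+1)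
              (⨂ₜ[k] (i : Fin (2*n+2)), a (i : ℕ)))) (2*n+1) = 0
          from hπ (2*n+1) (by omega), zero_add]
  | zero => rw [tmul_zero, map_zero, map_zero]; rfl
  | add u v _ _ h1 h2 =>
      rw [tmul_add, map_add, map_add, DirectSum.add_apply, h1, h2]
  | smul c u _ h1 =>
      rw [tmul_smul, map_smul, map_smul, DFinsupp.smul_apply, h1]

/-- Claim 1: the degree-`2n+2` component of `α (0, of n z)` picks out the
`A`-part of the unitization coefficient. -/
lemma claim1 (n : ℕ) (z : Unitization k A ⊗[k] (⨂[k] (_ : Fin (2*n+2)), A)) :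
    eT (alphaOf α n z) (2*n+2)
      = consEquiv (2*n+2)
          ((TensorProduct.map (Unitization.sndHom k k A) LinearMap.id) z) := by
  have hz : z ∈ (⊤ : Submodule k _) := trivial
  rw [← TensorProduct.span_tmul_eq_top] at hz
  induction hz using Submodule.span_induction with
  | mem t ht =>
      obtain ⟨x, v, rfl⟩ := ht
      have hv : v ∈ (⊤ : Submodule k _) := trivial
      rw [← PiTensorProduct.span_tprod_eq_top] at hv
      induction hv using Submodule.span_induction with
      | mem u hu =>
          obtain ⟨f, rfl⟩ := hu
          obtain ⟨a, rfl⟩ := exists_nat_ext f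
          rw [alphaOf_apply, hα n x a]
          set C := chainProd (fun j => ι (a (2*j)) * ι (a (2*j+1))
            - ι (a (2*j) * a (2*j+1))) n with hC
          set Top := eT.symm (DirectSum.of (fun m => ⨂[k] (_ : Fin (m + 1)), A) (2*n+1)
            (⨂ₜ[k] (i : Fin (2*n+2)), a (i : ℕ))) with hTop
          have hπ := chain_eq_top_add_lower eT hmul ι hι n a
          have hd : ι x.snd * C + x.fst • C
              = ι x.snd * Top + (ι x.snd * (C - Top) + x.fst • C) := by
            rw [mul_sub]
            abel
          rw [hd, map_add, DirectSum.add_apply]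
          have hlow : eT (ι x.snd * (C - Top) + x.fst • C) (2*n+2) = 0 := by
            have hm : ι x.snd * (C - Top) + x.fst • C ∈ Fle eT (2*n+1) := by
              refine Submodule.add_mem _ ?_ ?_
              · exact Fle_mono eT (by omega) (Fle_mul eT hmul (p := 0) (q := 2*n)
                  (iota_mem_Fle eT hmul ι hι _) hπ)
              · exact Submodule.smul_mem _ _ (chain_mem_Fle eT hmul ι hι n a)
            exact hm (2*n+2) (by omega)
          rw [hlow, add_zero]
          have htop : ι x.snd * Top
              = eT.symm (DirectSum.of (fun m => ⨂[k] (_ : Fin (m + 1)), A) (2*n+2)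
                (tprod k (Fin.cases x.snd (fun i : Fin (2*n+2) => a (i : ℕ))))) := by
            rw [hTop, hι' eT hmul ι hι (fun _ => x.snd), hmul 0 (2*n+1) (fun _ => x.snd) a]
            refine congrArg eT.symm (of_index_congr (by omega) _ _ fun i hi hi' => ?_)
            by_cases h : i ≤ 0
            · rw [if_pos h]
              obtain rfl : i = 0 := by omega
              have h0 : (⟨0, hi'⟩ : Fin (2*n+2+1)) = 0 := Fin.ext (by simp)
              rw [h0, Fin.cases_zero]
            · rw [if_neg h]
              obtain ⟨j, rfl⟩ : ∃ j, i = j + 1 := ⟨i - 1, by omega⟩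
              have hs : (⟨j+1, hi'⟩ : Fin (2*n+2+1)) = Fin.succ ⟨j, by omega⟩ := rfl
              rw [hs, Fin.cases_succ]
              show a (j + 1 - (0 + 1)) = a j
              exact congrArg a (by omega)
          rw [htop, eT.apply_symm_apply, DirectSum.of_eq_same, TensorProduct.map_tmul]
          rw [show (Unitization.sndHom k k A) x = x.snd from rfl,
            show LinearMap.id (PiTensorProduct.tprod k (fun i : Fin (2*n+2) => a (i : ℕ)))
              = PiTensorProduct.tprod k (fun i : Fin (2*n+2) => a (i : ℕ)) from rfl,
            consEquiv_tprod]
      | zero =>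
          rw [tmul_zero, map_zero, map_zero, map_zero, map_zero]
          rfl
      | add u v _ _ h1 h2 =>
          rw [tmul_add, map_add, map_add, DirectSum.add_apply, h1, h2, map_add, map_add]
      | smul c u _ h1 =>
          rw [tmul_smul, map_smul, map_smul, DFinsupp.smul_apply, h1, map_smul, map_smul]
  | zero =>
      rw [map_zero, map_zero, map_zero, map_zero]
      rfl
  | add u v _ _ h1 h2 =>
      rw [map_add, map_add, DirectSum.add_apply, h1, h2, map_add, map_add]
  | smul c u _ h1 =>
      rw [map_smul, map_smul, DFinsupp.smul_apply, h1, map_smul, map_smul]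

variable (hα0 : ∀ a : A, α (a, 0) = ι a)
include hα0
/-- injectivity on the direct-sum part, by downward induction on the support bound -/
lemma injW : ∀ (N : ℕ) (w : ⨁ (n : ℕ), (Unitization k A ⊗[k] (⨂[k] (_ : Fin (2 * n + 2)), A)))
    (b : A), (∀ n, N ≤ n → w n = 0) → α (b, w) = 0 → w = 0 := by
  intro N
  induction N with
  | zero =>
      intro w b hw _
      exact DFinsupp.ext fun n => hw n (Nat.zero_le n)
  | succ N ih =>
      intro w b hw h0
      have hw' : ∀ n, N ≤ n →
          (w - DirectSum.of (fun n => Unitization k A ⊗[k] (⨂[k] (_ : Fin (2 * n + 2)), A))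
            N (w N)) n = 0 := by
        intro n hn
        rcases Nat.lt_or_ge N n with h | h
        · rw [DFinsupp.sub_apply, hw n (by omega), DirectSum.of_eq_of_ne _ _ _ (by omega),
            sub_zero]
        · have : n = N := by omega
          subst this
          rw [DFinsupp.sub_apply, DirectSum.of_eq_same, sub_self]
      have heq1 : ((b : A), w)
          = (b, w - DirectSum.of (fun n => Unitization k A ⊗[k] (⨂[k] (_ : Fin (2 * n + 2)), A))
              N (w N))
            + ((0 : A), DirectSum.of (fun n => Unitization k A ⊗[k] (⨂[k] (_ : Fin (2 * n + 2)), A))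
              N (w N)) := by
        rw [Prod.mk_add_mk, add_zero, sub_add_cancel]
      have hmem : α (b, w - DirectSum.of
            (fun n => Unitization k A ⊗[k] (⨂[k] (_ : Fin (2 * n + 2)), A)) N (w N))
          ∈ Fle eT (2*N) := by
        have heq2 : ((b : A), w - DirectSum.of
              (fun n => Unitization k A ⊗[k] (⨂[k] (_ : Fin (2 * n + 2)), A)) N (w N))
            = ((b : A), (0 : ⨁ (n : ℕ), (Unitization k A ⊗[k] (⨂[k] (_ : Fin (2 * n + 2)), A))))
              + ((0 : A), w - DirectSum.of
                (fun n => Unitization k A ⊗[k] (⨂[k] (_ : Fin (2 * n + 2)), A)) N (w N)) := by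
          rw [Prod.mk_add_mk, add_zero, zero_add]
        rw [heq2, map_add, hα0, ← alphaPair_apply]
        exact Submodule.add_mem _ (Fle_mono eT (by omega) (iota_mem_Fle eT hmul ι hι b))
          (alpha_sum_mem_Fle eT hmul ι hι α hα N _ hw')
      have hofm : alphaOf α N (w N) ∈ Fle eT (2*N) := by
        have hadd : α ((b : A), w)
            = α (b, w - DirectSum.of
                (fun n => Unitization k A ⊗[k] (⨂[k] (_ : Fin (2 * n + 2)), A)) N (w N))
              + alphaOf α N (w N) := by
          rw [alphaOf_apply, ← map_add, ← heq1]
        rw [h0] at hadd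
        have h3 : alphaOf α N (w N)
            = - α (b, w - DirectSum.of
                (fun n => Unitization k A ⊗[k] (⨂[k] (_ : Fin (2 * n + 2)), A)) N (w N)) :=
          eq_neg_of_add_eq_zero_right hadd.symm
        rw [h3]
        exact Submodule.neg_mem _ hmem
      have hS : (TensorProduct.map (Unitization.sndHom k k A) LinearMap.id) (w N) = 0 := by
        have h1 : eT (alphaOf α N (w N)) (2*N+2) = 0 := hofm (2*N+2) (by omega)
        rw [claim1 eT hmul ι hι α hα N (w N)] at h1
        exact (LinearEquiv.map_eq_zero_iff _).mp h1
      have hrepr := unit_split (k := k) (A := A) (w N)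
      rw [hS, map_zero, add_zero] at hrepr
      have h2 : eT (alphaOf α N (w N)) (2*N+1) = 0 := hofm (2*N+1) (by omega)
      rw [hrepr] at h2
      rw [claim2 eT hmul ι hι α hα N _] at h2
      have hwN : w N = 0 := by rw [hrepr, h2, tmul_zero]
      refine ih w b (fun n hn => ?_) h0
      rcases Nat.lt_or_ge n (N+1) with h | h
      · have : n = N := by omega
        subst this
        exact hwN
      · exact hw n (by omega)


/-- surjectivity, by induction on the degree -/
lemma surj_aux : ∀ (m : ℕ) (x : ⨁ (m : ℕ), ⨂[k] (_ : Fin (m + 1)), A),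
    (∀ j, m ≤ j → x j = 0) → eT.symm x ∈ LinearMap.range α := by
  intro m
  induction m with
  | zero =>
      intro x hx
      have : x = 0 := DFinsupp.ext fun j => hx j (Nat.zero_le j)
      rw [this, map_zero]
      exact Submodule.zero_mem _
  | succ m ih =>
      intro x hx
      have hsplit : x = (x - DirectSum.of (fun m => ⨂[k] (_ : Fin (m + 1)), A) m (x m))
          + DirectSum.of (fun m => ⨂[k] (_ : Fin (m + 1)), A) m (x m) := by
        rw [sub_add_cancel]
      rw [hsplit, map_add]
      refine Submodule.add_mem _ ?_ ?_
      · refine ih _ ?_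
        intro j hj
        rcases Nat.lt_or_ge m j with h | h
        · rw [DFinsupp.sub_apply, hx j (by omega), DirectSum.of_eq_of_ne _ _ _ (by omega),
            sub_zero]
        · have : j = m := by omega
          subst this
          rw [DFinsupp.sub_apply, DirectSum.of_eq_same, sub_self]
      · -- degree-m pure tensors are in the range
        have key : ∀ t : ⨂[k] (_ : Fin (m + 1)), A,
            eT.symm (DirectSum.of (fun m => ⨂[k] (_ : Fin (m + 1)), A) m t)
              ∈ LinearMap.range α := by
          intro t
          have ht : t ∈ (⊤ : Submodule k _) := trivial
          rw [← PiTensorProduct.span_tprod_eq_top] at ht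
          induction ht using Submodule.span_induction with
          | zero => rw [map_zero, map_zero]; exact Submodule.zero_mem _
          | add u v _ _ h1 h2 => rw [map_add, map_add]; exact Submodule.add_mem _ h1 h2
          | smul c u _ h1 =>
              rw [of_smul'', map_smul]
              exact Submodule.smul_mem _ _ h1
          | mem u hu =>
              obtain ⟨f, rfl⟩ := hu
              obtain ⟨a, rfl⟩ := exists_nat_ext f
              match m, ih with
              | 0, ih =>
                  refine ⟨(a 0, 0), ?_⟩
                  rw [hα0, hι' eT hmul ι hι a]
              | (m'' + 1), ih =>
                  rcases Nat.even_or_odd m'' with ⟨n, hn⟩ | ⟨n, hn⟩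
                  · -- m = 2n + 1 : scalar part
                    obtain rfl : m'' = 2 * n := by omega
                    show eT.symm (DirectSum.of (fun m => ⨂[k] (_ : Fin (m + 1)), A) (2*n+1)
                        (⨂ₜ[k] (i : Fin (2*n+2)), a (i : ℕ))) ∈ LinearMap.range α
                    have hC := hα n 1 a
                    rw [Unitization.snd_one, Unitization.fst_one, hι0 eT hmul ι hι, zero_mul,
                      one_smul, zero_add] at hC
                    have hπ := chain_eq_top_add_lower eT hmul ι hι n a
                    have hr := ih _ (fun j hj => hπ j (by omega))
                    erw [eT.symm_apply_apply] at hr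
                    have hdec : eT.symm (DirectSum.of (fun m => ⨂[k] (_ : Fin (m + 1)), A) (2*n+1)
                        (⨂ₜ[k] (i : Fin (2*n+2)), a (i : ℕ)))
                        = chainProd (fun j => ι (a (2*j)) * ι (a (2*j+1))
                            - ι (a (2*j) * a (2*j+1))) n
                          - (chainProd (fun j => ι (a (2*j)) * ι (a (2*j+1))
                            - ι (a (2*j) * a (2*j+1))) n
                            - eT.symm (DirectSum.of (fun m => ⨂[k] (_ : Fin (m + 1)), A) (2*n+1)
                              (⨂ₜ[k] (i : Fin (2*n+2)), a (i : ℕ)))) := by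
                      rw [sub_sub_cancel]
                    rw [hdec]
                    exact Submodule.sub_mem _ ⟨_, hC⟩ hr
                  · -- m = 2n + 2 : algebra part
                    obtain rfl : m'' = 2 * n + 1 := by omega
                    show eT.symm (DirectSum.of (fun m => ⨂[k] (_ : Fin (m + 1)), A) (2*n+2)
                        (⨂ₜ[k] (i : Fin (2*n+3)), a (i : ℕ))) ∈ LinearMap.range α
                    have hC := hα n (Unitization.inr (a 0)) (fun j => a (j + 1))
                    rw [Unitization.snd_inr, Unitization.fst_inr, zero_smul, add_zero] at hC
                    have hπ := chain_eq_top_add_lower eT hmul ι hι n (fun j => a (j + 1))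
                    have hlow : ι (a 0) * (chainProd (fun j => ι (a (2*j+1)) * ι (a (2*j+1+1))
                        - ι (a (2*j+1) * a (2*j+1+1))) n
                        - eT.symm (DirectSum.of (fun m => ⨂[k] (_ : Fin (m + 1)), A) (2*n+1)
                          (⨂ₜ[k] (i : Fin (2*n+2)), a ((i : ℕ) + 1))))
                        ∈ Fle eT (2*n+1) := by
                      refine Fle_mono eT (by omega) (Fle_mul eT hmul (p := 0) (q := 2*n)
                        (iota_mem_Fle eT hmul ι hι _) ?_)
                      exact hπ
                    have hr := ih _ (fun j hj => hlow j (by omega))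
                    erw [eT.symm_apply_apply] at hr
                    -- the top part is the goal tensor
                    have htop : ι (a 0)
                        * eT.symm (DirectSum.of (fun m => ⨂[k] (_ : Fin (m + 1)), A) (2*n+1)
                          (⨂ₜ[k] (i : Fin (2*n+2)), a ((i : ℕ) + 1)))
                        = eT.symm (DirectSum.of (fun m => ⨂[k] (_ : Fin (m + 1)), A) (2*n+2)
                          (⨂ₜ[k] (i : Fin (2*n+3)), a (i : ℕ))) := by
                      rw [hι' eT hmul ι hι a, hmul 0 (2*n+1) a (fun j => a (j+1))]
                      refine congrArg eT.symm (of_index_congr (by omega) _ _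
                        fun i hi hi' => ?_)
                      by_cases h : i ≤ 0
                      · rw [if_pos h]
                      · rw [if_neg h]
                        show a ((i - (0 + 1)) + 1) = a i
                        exact congrArg a (by omega)
                    have hdec : eT.symm (DirectSum.of (fun m => ⨂[k] (_ : Fin (m + 1)), A) (2*n+2)
                        (⨂ₜ[k] (i : Fin (2*n+3)), a (i : ℕ)))
                        = ι (a 0) * chainProd (fun j => ι (a (2*j+1)) * ι (a (2*j+1+1))
                            - ι (a (2*j+1) * a (2*j+1+1))) n
                          - ι (a 0) * (chainProd (fun j => ι (a (2*j+1)) * ι (a (2*j+1+1))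
                            - ι (a (2*j+1) * a (2*j+1+1))) n
                            - eT.symm (DirectSum.of (fun m => ⨂[k] (_ : Fin (m + 1)), A) (2*n+1)
                              (⨂ₜ[k] (i : Fin (2*n+2)), a ((i : ℕ) + 1)))) := by
                      rw [mul_sub, ← htop]
                      abel
                    rw [hdec]
                    exact Submodule.sub_mem _ ⟨_, hC⟩ hr
        exact key (x m)

end Alpha


end Aux

end

/-- Let `T` be (a model of) the non-unital tensor algebra
`TA = ⊕_{m≥1} A^{⊗m}` of `A`, with `ι : A → T` the inclusion of the degree-one
part, and let `ω(x,y) = ι x * ι y − ι (x*y)` for `x, y ∈ A`.  Then any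
`k`-linear map `α : Ω^{ev}A → TA` with `α(a) = ι a` for `a ∈ Ω⁰A = A` and
`α((a,λ) ⊗ a₁ ⊗ … ⊗ a₂ₙ₊₂) = ι a * π + λ • π` for
`π = ω(a₁,a₂) ⋯ ω(a₂ₙ₊₁,a₂ₙ₊₂)`, is a `k`-linear bijection. -/
theorem even_forms_equiv_tensorAlgebra (k A : Type) [Field k] [NonUnitalRing A]
    [Module k A] [SMulCommClass k A A] [IsScalarTower k A A]
    (T : Type) [NonUnitalRing T] [Module k T] [SMulCommClass k T T]
    [IsScalarTower k T T]
    -- `T ≅ ⊕_{m ≥ 0} A^{⊗(m+1)}` as a `k`-module …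
    (eT : T ≃ₗ[k] ⨁ (m : ℕ), ⨂[k] (_ : Fin (m + 1)), A)
    -- … with the concatenation product:
    (hmul : ∀ (p q : ℕ) (a c : ℕ → A),
      eT.symm (DirectSum.of (fun m => ⨂[k] (_ : Fin (m + 1)), A) p
          (⨂ₜ[k] (i : Fin (p + 1)), a i))
        * eT.symm (DirectSum.of (fun m => ⨂[k] (_ : Fin (m + 1)), A) q
          (⨂ₜ[k] (i : Fin (q + 1)), c i))
      = eT.symm (DirectSum.of (fun m => ⨂[k] (_ : Fin (m + 1)), A) (p + q + 1)
          (⨂ₜ[k] (i : Fin (p + q + 2)),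
            (if (i : ℕ) ≤ p then a i else c ((i : ℕ) - (p + 1))))))
    -- the inclusion `ι : A = A^{⊗1} → T`
    (ι : A → T)
    (hι : ∀ a : A, ι a = eT.symm (DirectSum.of (fun m => ⨂[k] (_ : Fin (m + 1)), A) 0
        (⨂ₜ[k] (_ : Fin 1), a)))
    -- `α : Ω^{ev}A → T`, where `Ω^{ev}A = Ω⁰A ⊕ ⊕_{n≥0} Ω^{2n+2}A`:
    (α : (A × ⨁ (n : ℕ), (Unitization k A ⊗[k] (⨂[k] (_ : Fin (2 * n + 2)), A))) →ₗ[k] T)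
    (hα0 : ∀ a : A, α (a, 0) = ι a)
    (hα : ∀ (n : ℕ) (x : Unitization k A) (a : ℕ → A),
      α (0, DirectSum.of (fun n => Unitization k A ⊗[k] (⨂[k] (_ : Fin (2 * n + 2)), A)) n
          (x ⊗ₜ[k] (⨂ₜ[k] (i : Fin (2 * n + 2)), a i)))
        = ι x.snd * chainProd
              (fun j => ι (a (2 * j)) * ι (a (2 * j + 1)) - ι (a (2 * j) * a (2 * j + 1)))
              n
          + x.fst • chainProd
              (fun j => ι (a (2 * j)) * ι (a (2 * j + 1)) - ι (a (2 * j) * a (2 * j + 1)))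
              n) :
    Function.Bijective α := by
  constructor
  · -- injectivity
    have hker : ∀ v : (A × ⨁ (n : ℕ), (Unitization k A ⊗[k] (⨂[k] (_ : Fin (2 * n + 2)), A))),
        α v = 0 → v = 0 := by
      intro v hv
      obtain ⟨N, hN⟩ := exists_bound v.2
      have hw : v.2 = 0 := injW eT hmul ι hι α hα hα0 N v.2 v.1 hN hv
      have hveq : ((v.1 : A), (0 : ⨁ (n : ℕ),
          (Unitization k A ⊗[k] (⨂[k] (_ : Fin (2 * n + 2)), A)))) = v := by
        rw [← hw]
      have hiz : ι v.1 = 0 := by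
        rw [← hα0 v.1, hveq]
        exact hv
      rw [hι v.1] at hiz
      have h3 := (LinearEquiv.map_eq_zero_iff eT.symm).mp hiz
      have h5 := DirectSum.of_eq_same (β := fun m => ⨂[k] (_ : Fin (m + 1)), A) 0
        (⨂ₜ[k] (_ : Fin 1), v.1)
      rw [h3] at h5
      have h4 : (⨂ₜ[k] (_ : Fin 1), v.1) = (0 : ⨂[k] (_ : Fin 1), A) := h5.symm
      have h6 := congrArg (PiTensorProduct.subsingletonEquiv (R := k) (s := fun _ => A) (0 : Fin 1)) h4
      rw [PiTensorProduct.subsingletonEquiv_apply_tprod, map_zero] at h6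
      rw [← hveq, h6]
      rfl
    intro v1 v2 h12
    have h := hker (v1 - v2) (by rw [show α (v1 - v2) = α v1 - α v2 from map_sub α v1 v2, h12, sub_self])
    exact sub_eq_zero.mp h
  · -- surjectivity
    intro y
    obtain ⟨m, hm⟩ := exists_bound (eT y)
    have h := surj_aux eT hmul ι hι α hα hα0 m (eT y) hm
    rw [eT.symm_apply_apply] at h
    exact ⟨h.choose, h.choose_spec⟩
end

section
/- Let k be a field of characteristic 0, R a unital associative k-algebra which is quasi-free, and I a two-sided ideal of R. Then the multiplication map m : I ⊗ₖ I → I², m(x ⊗ y) = xy, admits an I-linear splitting: there exists a k-linear map s : I² → I ⊗ₖ I such that m ∘ s = id on I² and s(a·x) = a·s(x) for all a ∈ I and x ∈ I², where I acts on I ⊗ₖ I by a·(x ⊗ y) = (ax) ⊗ y. -/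
set_option maxHeartbeats 1000000
set_option synthInstance.maxHeartbeats 200000


/-!
STATEMENT 8: Let `k` be a field of characteristic 0, `R` a unital associative
`k`-algebra which is quasi-free, and `I` a two-sided ideal of `R`.  Then the
multiplication map `m : I ⊗ₖ I → I²`, `m (x ⊗ y) = x * y`, admits an
`I`-linear splitting: a `k`-linear `s : I² → I ⊗ₖ I` with `m ∘ s = id` and
`s (a • x) = a • s x` for `a ∈ I`, `x ∈ I²`, where `I` acts on `I ⊗ₖ I`
through the first factor.

A two-sided ideal of `R` is formalized as a `k`-submodule `I ⊆ R` closed under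
left and right multiplication by arbitrary elements of `R` (every two-sided
ring ideal is automatically a `k`-submodule since `k` is central in `R`).
-/

open TensorProduct

/-- A unital associative `k`-algebra `A` is *quasi-free* if for every unital
associative `k`-algebra `S`, every two-sided ideal `N` of `S` with `N ^ m = 0`
for some `m ≥ 1`, and every unital `k`-algebra homomorphism `α : A → S/N`,
there is a unital `k`-algebra homomorphism `α' : A → S` with `q ∘ α' = α`.
Nilpotent extensions are phrased as surjective algebra homomorphisms
`q : S → B` whose kernel `N` satisfies `N ^ m = 0`. -/
def IsQuasiFree (k A : Type) [Field k] [Ring A] [Algebra k A] : Prop :=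
  ∀ (S B : Type) [Ring S] [Ring B] [Algebra k S] [Algebra k B] (q : S →ₐ[k] B),
    Function.Surjective q →
    (∃ m : ℕ, 1 ≤ m ∧ ∀ f : Fin m → S, (∀ i, q (f i) = 0) → (List.ofFn f).prod = 0) →
    ∀ α : A →ₐ[k] B, ∃ α' : A →ₐ[k] S, q.comp α' = α

variable (k R : Type) [Field k] [Ring R] [Algebra k R]

/-- `I²`: the `k`-linear span of all products `x * y` with `x, y ∈ I`. -/
def idealSq (I : Submodule k R) : Submodule k R :=
  Submodule.span k {z | ∃ x ∈ I, ∃ y ∈ I, z = x * y}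

theorem mul_mem_idealSq {I : Submodule k R} {x y : R} (hx : x ∈ I) (hy : y ∈ I) :
    x * y ∈ idealSq k R I :=
  Submodule.subset_span ⟨x, hx, y, hy, rfl⟩

theorem idealSq_le {I : Submodule k R}
    (hleft : ∀ (r x : R), x ∈ I → r * x ∈ I) : idealSq k R I ≤ I := by
  rw [idealSq, Submodule.span_le]
  rintro _ ⟨x, hx, y, hy, rfl⟩
  exact hleft x y hy

/-- For `a ∈ I` and `x ∈ I²` one has `a * x ∈ I²`. -/
theorem smul_mem_idealSq {I : Submodule k R}
    (hleft : ∀ (r x : R), x ∈ I → r * x ∈ I) {a x : R}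
    (ha : a ∈ I) (hx : x ∈ idealSq k R I) : a * x ∈ idealSq k R I :=
  mul_mem_idealSq k R ha (idealSq_le k R hleft hx)

/-- The multiplication map `m : I ⊗ₖ I → I²`, `m (x ⊗ y) = x * y`. -/
noncomputable def mulII (I : Submodule k R) : (I ⊗[k] I) →ₗ[k] idealSq k R I :=
  TensorProduct.lift
    (LinearMap.mk₂ k (fun x y : I => (⟨(x : R) * (y : R),
        mul_mem_idealSq k R x.2 y.2⟩ : idealSq k R I))
      (fun x x' y => by ext; simp [add_mul])
      (fun c x y => by ext; simp [smul_mul_assoc])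
      (fun x y y' => by ext; simp [mul_add])
      (fun c x y => by ext; simp [mul_smul_comm]))

/-- Left multiplication by `a ∈ I` as a `k`-linear endomorphism of `I`. -/
def mulL {I : Submodule k R} (hleft : ∀ (r x : R), x ∈ I → r * x ∈ I) (a : I) :
    I →ₗ[k] I where
  toFun x := ⟨(a : R) * (x : R), hleft a x x.2⟩
  map_add' x y := by ext; simp [mul_add]
  map_smul' c x := by ext; simp [mul_smul_comm]

/- ------------------- auxiliary infrastructure ------------------------ -/
namespace QFA

variable {k R}

/-- Left multiplication by `r` as a `k`-linear endomorphism of `R`. -/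
def lmulR (r : R) : R →ₗ[k] R where
  toFun x := r * x
  map_add' x y := mul_add r x y
  map_smul' c x := mul_smul_comm c r x

@[simp] lemma lmulR_apply (r x : R) : (lmulR r : R →ₗ[k] R) x = r * x := rfl

variable (k R) in
/-- A left action of `R` on a `k`-module `V` by `k`-linear endomorphisms. -/
structure LAct (V : Type) [AddCommGroup V] [Module k V] where
  act : R → Module.End k V
  act_one : act 1 = LinearMap.id
  act_mul : ∀ r r' : R, act (r * r') = act r ∘ₗ act r'
  act_add : ∀ r r' : R, act (r + r') = act r + act r'
  act_ksmul : ∀ (c : k) (r : R), act (c • r) = c • act r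

variable {X V V₂ : Type} [AddCommGroup X] [Module k X] [AddCommGroup V] [Module k V]
  [AddCommGroup V₂] [Module k V₂]

lemma LAct.act_zero (A : LAct k R V) : A.act 0 = 0 := by
  have h := A.act_ksmul 0 0
  simpa using h

lemma LAct.act_algebraMap (A : LAct k R V) (c : k) :
    A.act (algebraMap k R c) = c • LinearMap.id := by
  rw [Algebra.algebraMap_eq_smul_one, A.act_ksmul, A.act_one]

/-- The endomorphism `(x, t) ↦ (r·x, r·t + f x)` of `X × V`. -/
def Phi (AX : LAct k R X) (AV : LAct k R V) (r : R) (f : X →ₗ[k] V) :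
    Module.End k (X × V) where
  toFun w := (AX.act r w.1, AV.act r w.2 + f w.1)
  map_add' w w' := by
    simp only [Prod.fst_add, Prod.snd_add, map_add, Prod.mk_add_mk, Prod.mk.injEq]
    exact ⟨trivial, by abel⟩
  map_smul' c w := by
    simp only [Prod.smul_fst, Prod.smul_snd, map_smul, RingHom.id_apply, Prod.smul_mk,
      smul_add]

@[simp] lemma Phi_apply (AX : LAct k R X) (AV : LAct k R V) (r : R) (f : X →ₗ[k] V)
    (w : X × V) : Phi AX AV r f w = (AX.act r w.1, AV.act r w.2 + f w.1) := rfl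

lemma Phi_mul (AX : LAct k R X) (AV : LAct k R V) (r r' : R) (f f' : X →ₗ[k] V) :
    Phi AX AV r f * Phi AX AV r' f' =
      Phi AX AV (r * r') (AV.act r ∘ₗ f' + f ∘ₗ AX.act r') := by
  apply LinearMap.ext; rintro ⟨x, t⟩
  simp only [Module.End.mul_apply, Phi_apply, AX.act_mul, AV.act_mul, LinearMap.comp_apply,
    LinearMap.add_apply, map_add, Prod.mk.injEq]
  exact ⟨trivial, by abel⟩

lemma Phi_one (AX : LAct k R X) (AV : LAct k R V) :
    Phi AX AV 1 0 = 1 := by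
  apply LinearMap.ext; rintro ⟨x, t⟩
  simp [Phi_apply, LAct.act_one]

lemma Phi_zero (AX : LAct k R X) (AV : LAct k R V) :
    Phi AX AV 0 0 = 0 := by
  apply LinearMap.ext; rintro ⟨x, t⟩
  simp [Phi_apply, LAct.act_zero]

lemma Phi_add (AX : LAct k R X) (AV : LAct k R V) (r r' : R) (f f' : X →ₗ[k] V) :
    Phi AX AV r f + Phi AX AV r' f' = Phi AX AV (r + r') (f + f') := by
  apply LinearMap.ext; rintro ⟨x, t⟩
  simp only [LinearMap.add_apply, Phi_apply, LAct.act_add, Prod.mk_add_mk, Prod.mk.injEq]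
  exact ⟨trivial, by abel⟩

lemma Phi_algebraMap (AX : LAct k R X) (AV : LAct k R V) (c : k) :
    Phi AX AV (algebraMap k R c) 0 = algebraMap k (Module.End k (X × V)) c := by
  apply LinearMap.ext; rintro ⟨x, t⟩
  simp [Phi_apply, LAct.act_algebraMap, Module.algebraMap_end_apply, Prod.smul_mk]

lemma Phi_inj {AX : LAct k R X} {AV : LAct k R V} {r r' : R} {f g : X →ₗ[k] V}
    (h : Phi AX AV r f = Phi AX AV r' g) : f = g := by
  ext x
  have h2 := LinearMap.congr_fun h (x, 0)
  simp only [Phi_apply, map_zero, zero_add, Prod.mk.injEq] at h2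
  exact h2.2

/-- The subalgebra of `R × End (X × V)` of pairs `(r, Phi r f)`. -/
def SSub (AX : LAct k R X) (AV : LAct k R V) :
    Subalgebra k (R × Module.End k (X × V)) where
  carrier := {p | ∃ f : X →ₗ[k] V, p.2 = Phi AX AV p.1 f}
  mul_mem' := by
    rintro p q ⟨f, hf⟩ ⟨g, hg⟩
    exact ⟨AV.act p.1 ∘ₗ g + f ∘ₗ AX.act q.1, by
      simp only [Prod.snd_mul, Prod.fst_mul, hf, hg, Phi_mul]⟩
  one_mem' := ⟨0, by simp only [Prod.snd_one, Prod.fst_one, Phi_one]⟩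
  add_mem' := by
    rintro p q ⟨f, hf⟩ ⟨g, hg⟩
    exact ⟨f + g, by simp only [Prod.snd_add, Prod.fst_add, hf, hg, Phi_add]⟩
  zero_mem' := ⟨0, by simp only [Prod.snd_zero, Prod.fst_zero, Phi_zero]⟩
  algebraMap_mem' c :=
    ⟨0, by
      have h1 : (algebraMap k (R × Module.End k (X × V)) c).1 = algebraMap k R c := rfl
      have h2 : (algebraMap k (R × Module.End k (X × V)) c).2
          = algebraMap k (Module.End k (X × V)) c := rfl
      rw [h1, h2, Phi_algebraMap]⟩

lemma mem_SSub {AX : LAct k R X} {AV : LAct k R V} {p : R × Module.End k (X × V)} :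
    p ∈ SSub AX AV ↔ ∃ f : X →ₗ[k] V, p.2 = Phi AX AV p.1 f := Iff.rfl

/-- Extract the `f` from an endomorphism of the shape `Phi r f`. -/
def ext2 (p : R × Module.End k (X × V)) : X →ₗ[k] V :=
  LinearMap.snd k X V ∘ₗ p.2 ∘ₗ LinearMap.inl k X V

lemma ext2_apply (p : R × Module.End k (X × V)) (x : X) :
    ext2 p x = (p.2 (x, 0)).2 := rfl

lemma ext2_of (AX : LAct k R X) (AV : LAct k R V) {p : R × Module.End k (X × V)}
    {r : R} {f : X →ₗ[k] V} (h : p.2 = Phi AX AV r f) : ext2 p = f := by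
  ext x
  simp [ext2_apply, h, Phi_apply]


/-- The underlying function of the quotient map between the two subalgebras. -/
noncomputable def qfun (AX : LAct k R X) (A1 : LAct k R V) (A2 : LAct k R V₂)
    (μ : V →ₗ[k] V₂) (s : ↥(SSub AX A1)) : ↥(SSub AX A2) :=
  ⟨(s.val.1, Phi AX A2 s.val.1 (μ ∘ₗ ext2 s.val)), ⟨μ ∘ₗ ext2 s.val, rfl⟩⟩

lemma qfun_val (AX : LAct k R X) (A1 : LAct k R V) (A2 : LAct k R V₂)
    (μ : V →ₗ[k] V₂) (s : ↥(SSub AX A1)) :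
    (qfun AX A1 A2 μ s).val = (s.val.1, Phi AX A2 s.val.1 (μ ∘ₗ ext2 s.val)) := rfl

lemma qfun_one (AX : LAct k R X) (A1 : LAct k R V) (A2 : LAct k R V₂)
    (μ : V →ₗ[k] V₂) : qfun AX A1 A2 μ 1 = 1 := by
  apply Subtype.ext
  rw [qfun_val, Subalgebra.coe_one, Subalgebra.coe_one]
  have he : ext2 (1 : R × Module.End k (X × V)) = 0 := by
    ext x; simp [ext2_apply, Prod.snd_one]
  rw [he, Prod.fst_one, LinearMap.comp_zero, Phi_one, Prod.mk_one_one]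

lemma qfun_add (AX : LAct k R X) (A1 : LAct k R V) (A2 : LAct k R V₂)
    (μ : V →ₗ[k] V₂) (s t : ↥(SSub AX A1)) :
    qfun AX A1 A2 μ (s + t) = qfun AX A1 A2 μ s + qfun AX A1 A2 μ t := by
  apply Subtype.ext
  rw [Subalgebra.coe_add, qfun_val, qfun_val, qfun_val, Subalgebra.coe_add]
  have he : ext2 (s.val + t.val) = ext2 s.val + ext2 t.val := by
    ext x
    simp [ext2_apply, Prod.snd_add, LinearMap.add_apply]
  rw [he, Prod.fst_add, LinearMap.comp_add, ← Phi_add, Prod.mk_add_mk]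

lemma qfun_mul (AX : LAct k R X) (A1 : LAct k R V) (A2 : LAct k R V₂)
    (μ : V →ₗ[k] V₂) (hμ : ∀ r : R, μ ∘ₗ A1.act r = A2.act r ∘ₗ μ) (s t : ↥(SSub AX A1)) :
    qfun AX A1 A2 μ (s * t) = qfun AX A1 A2 μ s * qfun AX A1 A2 μ t := by
  apply Subtype.ext
  obtain ⟨f, hf⟩ := s.property
  obtain ⟨g, hg⟩ := t.property
  have hmul2 : (s.val * t.val).2 = Phi AX A1 (s.val.1 * t.val.1)
      (A1.act s.val.1 ∘ₗ g + f ∘ₗ AX.act t.val.1) := by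
    rw [Prod.snd_mul, hf, hg, Phi_mul]
  have he : ext2 (s.val * t.val) = A1.act s.val.1 ∘ₗ g + f ∘ₗ AX.act t.val.1 :=
    ext2_of AX A1 hmul2
  have hes : ext2 s.val = f := ext2_of AX A1 hf
  have het : ext2 t.val = g := ext2_of AX A1 hg
  have hμcomp : μ ∘ₗ (A1.act s.val.1 ∘ₗ g + f ∘ₗ AX.act t.val.1)
      = A2.act s.val.1 ∘ₗ (μ ∘ₗ g) + (μ ∘ₗ f) ∘ₗ AX.act t.val.1 := by
    ext x
    have h := LinearMap.congr_fun (hμ s.val.1) (g x)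
    simp only [LinearMap.comp_apply, LinearMap.add_apply, map_add] at h ⊢
    rw [h]
  rw [Subalgebra.coe_mul, qfun_val, qfun_val, qfun_val]
  have hcoe : ((s * t : ↥(SSub AX A1)) : R × Module.End k (X × V)) = s.val * t.val :=
    Subalgebra.coe_mul _ s t
  rw [hcoe, he, Prod.fst_mul, hμcomp, ← Phi_mul, Prod.mk_mul_mk, hes, het]

lemma qfun_commutes (AX : LAct k R X) (A1 : LAct k R V) (A2 : LAct k R V₂)
    (μ : V →ₗ[k] V₂) (c : k) :
    qfun AX A1 A2 μ (algebraMap k ↥(SSub AX A1) c) = algebraMap k ↥(SSub AX A2) c := by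
  apply Subtype.ext
  rw [qfun_val, Subalgebra.coe_algebraMap, Subalgebra.coe_algebraMap]
  have h1 : (algebraMap k (R × Module.End k (X × V)) c).1 = algebraMap k R c := rfl
  have h2 : (algebraMap k (R × Module.End k (X × V)) c).2
      = algebraMap k (Module.End k (X × V)) c := rfl
  have he : ext2 (algebraMap k (R × Module.End k (X × V)) c) = 0 := by
    ext x
    simp [ext2_apply, h2, Module.algebraMap_end_apply, Prod.smul_mk]
  rw [he, h1, LinearMap.comp_zero, Phi_algebraMap]
  rfl

/-- The quotient map between two such subalgebras, induced by an intertwiner `μ`. -/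
noncomputable def qmap (AX : LAct k R X) (A1 : LAct k R V) (A2 : LAct k R V₂)
    (μ : V →ₗ[k] V₂) (hμ : ∀ r : R, μ ∘ₗ A1.act r = A2.act r ∘ₗ μ) :
    ↥(SSub AX A1) →ₐ[k] ↥(SSub AX A2) :=
  { RingHom.mk' ⟨⟨qfun AX A1 A2 μ, qfun_one AX A1 A2 μ⟩, qfun_mul AX A1 A2 μ hμ⟩
      (qfun_add AX A1 A2 μ) with
    commutes' := qfun_commutes AX A1 A2 μ }

lemma qmap_apply (AX : LAct k R X) (A1 : LAct k R V) (A2 : LAct k R V₂)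
    (μ : V →ₗ[k] V₂) (hμ : ∀ r : R, μ ∘ₗ A1.act r = A2.act r ∘ₗ μ) (s : ↥(SSub AX A1)) :
    qmap AX A1 A2 μ hμ s = qfun AX A1 A2 μ s := rfl

lemma qmap_surjective (AX : LAct k R X) (A1 : LAct k R V) (A2 : LAct k R V₂)
    (μ : V →ₗ[k] V₂) (hμ : ∀ r : R, μ ∘ₗ A1.act r = A2.act r ∘ₗ μ)
    (σ₀ : V₂ →ₗ[k] V) (hσ₀ : μ ∘ₗ σ₀ = LinearMap.id) :
    Function.Surjective (qmap AX A1 A2 μ hμ) := by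
  rintro ⟨p, g, hg⟩
  refine ⟨⟨(p.1, Phi AX A1 p.1 (σ₀ ∘ₗ g)), ⟨σ₀ ∘ₗ g, rfl⟩⟩, ?_⟩
  apply Subtype.ext
  have he : ext2 ((p.1, Phi AX A1 p.1 (σ₀ ∘ₗ g)) : R × Module.End k (X × V)) = σ₀ ∘ₗ g :=
    ext2_of AX A1 rfl
  rw [qmap_apply]
  apply Prod.ext
  · rfl
  · show Phi AX A2 p.1 (μ ∘ₗ ext2 ((p.1, Phi AX A1 p.1 (σ₀ ∘ₗ g))
        : R × Module.End k (X × V))) = p.2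
    rw [he, ← LinearMap.comp_assoc, hσ₀, LinearMap.id_comp, ← hg]

/-- The homomorphism `r ↦ (r, Phi r (Dq r))` built from a twisted derivation `Dq`. -/
def alphaHom (AX : LAct k R X) (A2 : LAct k R V₂) (Dq : R → X →ₗ[k] V₂)
    (hone : Dq 1 = 0)
    (hmul : ∀ r r' : R, Dq (r * r') = A2.act r ∘ₗ Dq r' + Dq r ∘ₗ AX.act r')
    (hadd : ∀ r r' : R, Dq (r + r') = Dq r + Dq r')
    (hsmul : ∀ (c : k) (r : R), Dq (c • r) = c • Dq r) :
    R →ₐ[k] ↥(SSub AX A2) where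
  toFun r := ⟨(r, Phi AX A2 r (Dq r)), ⟨Dq r, rfl⟩⟩
  map_one' := by
    apply Subtype.ext
    show (1, Phi AX A2 1 (Dq 1)) = _
    rw [hone, Phi_one]
    rfl
  map_mul' r r' := by
    apply Subtype.ext
    show (r * r', Phi AX A2 (r * r') (Dq (r * r')))
        = ((r, Phi AX A2 r (Dq r)) : R × Module.End k (X × V₂)) * (r', Phi AX A2 r' (Dq r'))
    rw [Prod.mk_mul_mk, Phi_mul, hmul]
  map_zero' := by
    apply Subtype.ext
    have h0 : Dq 0 = 0 := by
      have h := hsmul 0 1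
      simpa using h
    show (0, Phi AX A2 0 (Dq 0)) = _
    rw [h0, Phi_zero]
    rfl
  map_add' r r' := by
    apply Subtype.ext
    show (r + r', Phi AX A2 (r + r') (Dq (r + r')))
        = ((r, Phi AX A2 r (Dq r)) : R × Module.End k (X × V₂)) + (r', Phi AX A2 r' (Dq r'))
    rw [Prod.mk_add_mk, Phi_add, hadd]
  commutes' c := by
    apply Subtype.ext
    have h0 : Dq (algebraMap k R c) = 0 := by
      rw [Algebra.algebraMap_eq_smul_one, hsmul, hone, smul_zero]
    show (algebraMap k R c, Phi AX A2 (algebraMap k R c) (Dq (algebraMap k R c)))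
        = algebraMap k (R × Module.End k (X × V₂)) c
    rw [h0, Phi_algebraMap]
    rfl


/-- Packaged application of quasi-freeness: existence of a family `sf r : X →ₗ V`
lifting the twisted derivation `Dq` along `μ`, with a twisted multiplicativity. -/
lemma sfun_exists (AX : LAct k R X) (A1 : LAct k R V) (A2 : LAct k R V₂)
    (μ : V →ₗ[k] V₂) (hμ : ∀ r : R, μ ∘ₗ A1.act r = A2.act r ∘ₗ μ)
    (σ₀ : V₂ →ₗ[k] V) (hσ₀ : μ ∘ₗ σ₀ = LinearMap.id)
    (Dq : R → X →ₗ[k] V₂)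
    (hone : Dq 1 = 0)
    (hmul : ∀ r r' : R, Dq (r * r') = A2.act r ∘ₗ Dq r' + Dq r ∘ₗ AX.act r')
    (hadd : ∀ r r' : R, Dq (r + r') = Dq r + Dq r')
    (hsmul : ∀ (c : k) (r : R), Dq (c • r) = c • Dq r)
    (hR : IsQuasiFree k R) :
    ∃ sf : R → (X →ₗ[k] V),
      (∀ r : R, μ ∘ₗ sf r = Dq r) ∧
      (∀ r r' : R, sf (r * r') = A1.act r ∘ₗ sf r' + sf r ∘ₗ AX.act r') ∧
      (∀ r r' : R, sf (r + r') = sf r + sf r') ∧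
      (∀ (c : k) (r : R), sf (c • r) = c • sf r) := by
  obtain ⟨α', hα'⟩ := hR ↥(SSub AX A1) ↥(SSub AX A2) (qmap AX A1 A2 μ hμ)
    (qmap_surjective AX A1 A2 μ hμ σ₀ hσ₀)
    ⟨2, one_le_two, by
      intro f hf
      have hv1 : ∀ i, ((f i : ↥(SSub AX A1)) : R × Module.End k (X × V)).1 = 0 := by
        intro i
        have h := congrArg
          (fun b : ↥(SSub AX A2) => (b : R × Module.End k (X × V₂)).1) (hf i)
        simpa [qmap_apply, qfun_val] using h
      have hofFn : List.ofFn f = [f 0, f 1] := by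
        simp [List.ofFn_succ]
      rw [hofFn]
      simp only [List.prod_cons, List.prod_nil, mul_one]
      obtain ⟨g0, hg0⟩ := (f 0).property
      obtain ⟨g1, hg1⟩ := (f 1).property
      apply Subtype.ext
      rw [Subalgebra.coe_mul, ZeroMemClass.coe_zero]
      apply Prod.ext
      · rw [Prod.fst_mul, hv1 0, zero_mul, Prod.fst_zero]
      · rw [Prod.snd_mul, hg0, hg1, hv1 0, hv1 1, Phi_mul, LAct.act_zero,
          LAct.act_zero, LinearMap.zero_comp, LinearMap.comp_zero, add_zero,
          zero_mul, Phi_zero, Prod.snd_zero]⟩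
    (alphaHom AX A2 Dq hone hmul hadd hsmul)
  have hqv : ∀ r : R,
      ((qmap AX A1 A2 μ hμ) (α' r)).val = (r, Phi AX A2 r (Dq r)) := by
    intro r
    have h := DFunLike.congr_fun hα' r
    rw [AlgHom.comp_apply] at h
    rw [h]
    rfl
  have hfst : ∀ r : R, (α' r).val.1 = r := by
    intro r
    have h := congrArg Prod.fst (hqv r)
    rw [qmap_apply, qfun_val] at h
    exact h
  refine ⟨fun r => ext2 (α' r).val, ?_, ?_, ?_, ?_⟩
  · intro r
    have h := congrArg Prod.snd (hqv r)
    rw [qmap_apply, qfun_val] at h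
    exact Phi_inj h
  · intro r r'
    obtain ⟨f, hf⟩ := (α' r).property
    obtain ⟨g, hg⟩ := (α' r').property
    rw [hfst] at hf hg
    have hef : ext2 (α' r).val = f := ext2_of AX A1 hf
    have heg : ext2 (α' r').val = g := ext2_of AX A1 hg
    have hval2 : (α' (r * r')).val.2 = Phi AX A1 (r * r')
        (A1.act r ∘ₗ g + f ∘ₗ AX.act r') := by
      rw [map_mul α']
      show ((α' r).val * (α' r').val).2 = _
      rw [Prod.snd_mul, hf, hg, Phi_mul]
    show ext2 (α' (r * r')).val = A1.act r ∘ₗ ext2 (α' r').val + ext2 (α' r).val ∘ₗ AX.act r'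
    rw [ext2_of AX A1 hval2, hef, heg]
  · intro r r'
    show ext2 (α' (r + r')).val = ext2 (α' r).val + ext2 (α' r').val
    rw [map_add α']
    show ext2 ((α' r + α' r' : ↥(SSub AX A1))).val = _
    rw [Subalgebra.coe_add]
    ext x
    simp [ext2_apply, Prod.snd_add, LinearMap.add_apply]
  · intro c r
    show ext2 (α' (c • r)).val = c • ext2 (α' r).val
    have hsm : α' (c • r) = c • α' r := by
      have h := map_smul α'.toLinearMap c r
      simpa using h
    rw [hsm]
    show ext2 ((c • α' r : ↥(SSub AX A1))).val = _
    rw [SetLike.val_smul]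
    ext x
    simp [ext2_apply, Prod.smul_snd, LinearMap.smul_apply]

/-! ### Concrete instantiations -/

section Concrete

variable (k R)

lemma mul_left_mem_sq (I : Submodule k R) (hleft : ∀ (r x : R), x ∈ I → r * x ∈ I)
    (r : R) {z : R} (hz : z ∈ idealSq k R I) :
    r * z ∈ idealSq k R I := by
  induction hz using Submodule.span_induction with
  | mem x hx =>
    obtain ⟨u, hu, v, hv, rfl⟩ := hx
    rw [← mul_assoc]
    exact mul_mem_idealSq k R (hleft r u hu) hv
  | zero => rw [mul_zero]; exact Submodule.zero_mem _
  | add x y hx hy ihx ihy => rw [mul_add]; exact Submodule.add_mem _ ihx ihy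
  | smul c x hx ih => rw [mul_smul_comm]; exact Submodule.smul_mem _ c ih

/-- Left multiplication by `r : R` on `I`. -/
def lmulI (I : Submodule k R) (hleft : ∀ (r x : R), x ∈ I → r * x ∈ I)
    (r : R) : ↥I →ₗ[k] ↥I where
  toFun x := ⟨r * (x : R), hleft r x x.2⟩
  map_add' x y := by ext; simp [mul_add]
  map_smul' c x := by ext; simp [mul_smul_comm]

@[simp] lemma lmulI_coe (I : Submodule k R) (hleft : ∀ (r x : R), x ∈ I → r * x ∈ I)
    (r : R) (x : ↥I) : ((lmulI k R I hleft r x : ↥I) : R) = r * x := rfl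

/-- Left multiplication by `r : R` on `I²`. -/
def lmulJ (I : Submodule k R) (hleft : ∀ (r x : R), x ∈ I → r * x ∈ I)
    (r : R) : ↥(idealSq k R I) →ₗ[k] ↥(idealSq k R I) where
  toFun z := ⟨r * (z : R), mul_left_mem_sq k R I hleft r z.2⟩
  map_add' x y := by ext; simp [mul_add]
  map_smul' c x := by ext; simp [mul_smul_comm]

@[simp] lemma lmulJ_coe (I : Submodule k R) (hleft : ∀ (r x : R), x ∈ I → r * x ∈ I)
    (r : R) (z : ↥(idealSq k R I)) :
    ((lmulJ k R I hleft r z : ↥(idealSq k R I)) : R) = r * z := rfl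

lemma lmulI_one (I : Submodule k R) (hleft : ∀ (r x : R), x ∈ I → r * x ∈ I) :
    lmulI k R I hleft 1 = LinearMap.id := by
  apply LinearMap.ext; intro x; apply Subtype.ext; simp

lemma lmulI_comp (I : Submodule k R) (hleft : ∀ (r x : R), x ∈ I → r * x ∈ I) (r r' : R) :
    lmulI k R I hleft (r * r') = lmulI k R I hleft r ∘ₗ lmulI k R I hleft r' := by
  apply LinearMap.ext; intro x; apply Subtype.ext; simp [mul_assoc]

lemma lmulI_add (I : Submodule k R) (hleft : ∀ (r x : R), x ∈ I → r * x ∈ I) (r r' : R) :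
    lmulI k R I hleft (r + r') = lmulI k R I hleft r + lmulI k R I hleft r' := by
  apply LinearMap.ext; intro x; apply Subtype.ext
  simp [add_mul]

lemma lmulI_ksmul (I : Submodule k R) (hleft : ∀ (r x : R), x ∈ I → r * x ∈ I)
    (c : k) (r : R) :
    lmulI k R I hleft (c • r) = c • lmulI k R I hleft r := by
  apply LinearMap.ext; intro x; apply Subtype.ext
  simp [smul_mul_assoc]

/-- The action of `R` on `I²`. -/
def actJ (I : Submodule k R) (hleft : ∀ (r x : R), x ∈ I → r * x ∈ I) :
    LAct k R ↥(idealSq k R I) where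
  act := lmulJ k R I hleft
  act_one := by apply LinearMap.ext; intro z; apply Subtype.ext; simp
  act_mul r r' := by
    apply LinearMap.ext; intro z; apply Subtype.ext; simp [mul_assoc]
  act_add r r' := by
    apply LinearMap.ext; intro z; apply Subtype.ext; simp [add_mul]
  act_ksmul c r := by
    apply LinearMap.ext; intro z; apply Subtype.ext; simp [smul_mul_assoc]

@[simp] lemma actJ_act (I : Submodule k R) (hleft : ∀ (r x : R), x ∈ I → r * x ∈ I)
    (r : R) : (actJ k R I hleft).act r = lmulJ k R I hleft r := rfl

/-- The action of `R` on `I ⊗ I` through the first factor. -/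
noncomputable def actT (I : Submodule k R) (hleft : ∀ (r x : R), x ∈ I → r * x ∈ I) :
    LAct k R (↥I ⊗[k] ↥I) where
  act r := LinearMap.rTensor ↥I (lmulI k R I hleft r)
  act_one := by simp only [lmulI_one, LinearMap.rTensor_id]
  act_mul r r' := by simp only [lmulI_comp, LinearMap.rTensor_comp]
  act_add r r' := by simp only [lmulI_add, LinearMap.rTensor_add]
  act_ksmul c r := by simp only [lmulI_ksmul, LinearMap.rTensor_smul]

@[simp] lemma actT_act (I : Submodule k R) (hleft : ∀ (r x : R), x ∈ I → r * x ∈ I)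
    (r : R) : (actT k R I hleft).act r = LinearMap.rTensor ↥I (lmulI k R I hleft r) := rfl

/-- Left multiplication by `r` descended to `R ⧸ I²`. -/
def lquotX (I : Submodule k R) (hleft : ∀ (r x : R), x ∈ I → r * x ∈ I) (r : R) :
    (R ⧸ idealSq k R I) →ₗ[k] (R ⧸ idealSq k R I) :=
  Submodule.mapQ _ _ (lmulR r)
    (fun z hz => by
      rw [Submodule.mem_comap]
      exact mul_left_mem_sq k R I hleft r hz)

@[simp] lemma lquotX_mk (I : Submodule k R) (hleft : ∀ (r x : R), x ∈ I → r * x ∈ I)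
    (r a : R) :
    lquotX k R I hleft r (Submodule.Quotient.mk a) = Submodule.Quotient.mk (r * a) := by
  rw [lquotX, Submodule.mapQ_apply, lmulR_apply]

/-- The action of `R` on `R ⧸ I²`. -/
def actX (I : Submodule k R) (hleft : ∀ (r x : R), x ∈ I → r * x ∈ I) :
    LAct k R (R ⧸ idealSq k R I) where
  act := lquotX k R I hleft
  act_one := by
    apply Submodule.linearMap_qext
    apply LinearMap.ext; intro a
    simp [lquotX_mk]
  act_mul r r' := by
    apply Submodule.linearMap_qext
    apply LinearMap.ext; intro a
    simp [lquotX_mk, mul_assoc]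
  act_add r r' := by
    apply Submodule.linearMap_qext
    apply LinearMap.ext; intro a
    simp only [LinearMap.comp_apply, Submodule.mkQ_apply, lquotX_mk,
      LinearMap.add_apply, add_mul]
    rw [← Submodule.Quotient.mk_add]
  act_ksmul c r := by
    apply Submodule.linearMap_qext
    apply LinearMap.ext; intro a
    simp only [LinearMap.comp_apply, Submodule.mkQ_apply, lquotX_mk,
      LinearMap.smul_apply, smul_mul_assoc]
    rw [← Submodule.Quotient.mk_smul]

@[simp] lemma actX_mk (I : Submodule k R) (hleft : ∀ (r x : R), x ∈ I → r * x ∈ I)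
    (r a : R) :
    (actX k R I hleft).act r (Submodule.Quotient.mk a)
      = Submodule.Quotient.mk (r * a) := lquotX_mk k R I hleft r a

@[simp] lemma mulII_tmul (I : Submodule k R) (x y : ↥I) :
    mulII k R I (x ⊗ₜ[k] y)
      = ⟨(x : R) * (y : R), mul_mem_idealSq k R x.2 y.2⟩ := rfl

lemma mulII_intertwine (I : Submodule k R) (hleft : ∀ (r x : R), x ∈ I → r * x ∈ I)
    (r : R) :
    mulII k R I ∘ₗ (actT k R I hleft).act r
      = (actJ k R I hleft).act r ∘ₗ mulII k R I := by
  apply TensorProduct.ext'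
  intro x y
  apply Subtype.ext
  simp only [LinearMap.comp_apply, actT_act, actJ_act, LinearMap.rTensor_tmul,
    mulII_tmul, lmulJ_coe, lmulI_coe, mul_assoc]

lemma mulII_range_aux (I : Submodule k R) :
    ∀ w, w ∈ idealSq k R I →
      ∃ t : ↥I ⊗[k] ↥I, ((mulII k R I t : ↥(idealSq k R I)) : R) = w := by
  intro w hw
  induction hw using Submodule.span_induction with
  | mem x hx =>
    obtain ⟨u, hu, v, hv, rfl⟩ := hx
    exact ⟨(⟨u, hu⟩ : ↥I) ⊗ₜ[k] (⟨v, hv⟩ : ↥I), rfl⟩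
  | zero => exact ⟨0, by simp⟩
  | add x y hx hy ihx ihy =>
    obtain ⟨t1, ht1⟩ := ihx
    obtain ⟨t2, ht2⟩ := ihy
    exact ⟨t1 + t2, by rw [map_add, Submodule.coe_add, ht1, ht2]⟩
  | smul c x hx ih =>
    obtain ⟨t, ht⟩ := ih
    exact ⟨c • t, by rw [map_smul, SetLike.val_smul, ht]⟩

lemma mulII_range (I : Submodule k R) : LinearMap.range (mulII k R I) = ⊤ := by
  rw [eq_top_iff]
  rintro ⟨z, hz⟩ -
  obtain ⟨t, ht⟩ := mulII_range_aux k R I z hz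
  exact ⟨t, Subtype.ext ht⟩

/-- The inner twisted derivation `a ↦ π'(r a) - r π'(a)`. -/
def DL (I : Submodule k R) (hleft : ∀ (r x : R), x ∈ I → r * x ∈ I)
    (π' : R →ₗ[k] ↥(idealSq k R I)) (r : R) : R →ₗ[k] ↥(idealSq k R I) :=
  π' ∘ₗ lmulR r - lmulJ k R I hleft r ∘ₗ π'

lemma DL_apply (I : Submodule k R) (hleft : ∀ (r x : R), x ∈ I → r * x ∈ I)
    (π' : R →ₗ[k] ↥(idealSq k R I)) (r a : R) :
    DL k R I hleft π' r a = π' (r * a) - lmulJ k R I hleft r (π' a) := rfl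

/-- The twisted derivation descended to `R ⧸ I²`. -/
def DQ (I : Submodule k R) (hleft : ∀ (r x : R), x ∈ I → r * x ∈ I)
    (π' : R →ₗ[k] ↥(idealSq k R I))
    (hπ : ∀ (z : R) (hz : z ∈ idealSq k R I), π' z = ⟨z, hz⟩) (r : R) :
    (R ⧸ idealSq k R I) →ₗ[k] ↥(idealSq k R I) :=
  Submodule.liftQ _ (DL k R I hleft π' r)
    (by
      intro z hz
      rw [LinearMap.mem_ker, DL_apply, hπ z hz]
      have h2 : π' (r * z) = ⟨r * z, mul_left_mem_sq k R I hleft r hz⟩ :=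
        hπ (r * z) (mul_left_mem_sq k R I hleft r hz)
      rw [h2]
      apply sub_eq_zero_of_eq
      apply Subtype.ext
      rfl)

variable (I : Submodule k R) (hleft : ∀ (r x : R), x ∈ I → r * x ∈ I)
    (π' : R →ₗ[k] ↥(idealSq k R I))
    (hπ : ∀ (z : R) (hz : z ∈ idealSq k R I), π' z = ⟨z, hz⟩)

lemma DQ_mk (r a : R) :
    DQ k R I hleft π' hπ r (Submodule.Quotient.mk a)
      = π' (r * a) - lmulJ k R I hleft r (π' a) := by
  show Submodule.liftQ _ _ _ _ = _
  rw [Submodule.liftQ_apply, DL_apply]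

lemma DQ_one : DQ k R I hleft π' hπ 1 = 0 := by
  apply Submodule.linearMap_qext
  apply LinearMap.ext; intro a
  simp only [LinearMap.comp_apply, Submodule.mkQ_apply, LinearMap.zero_apply, DQ_mk]
  apply Subtype.ext
  rw [Submodule.coe_sub, lmulJ_coe, one_mul]
  simp

lemma DQ_mul (r r' : R) :
    DQ k R I hleft π' hπ (r * r')
      = (actJ k R I hleft).act r ∘ₗ DQ k R I hleft π' hπ r'
        + DQ k R I hleft π' hπ r ∘ₗ (actX k R I hleft).act r' := by
  apply Submodule.linearMap_qext
  apply LinearMap.ext; intro a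
  simp only [LinearMap.comp_apply, Submodule.mkQ_apply, LinearMap.add_apply, DQ_mk,
    actX_mk, actJ_act]
  apply Subtype.ext
  simp only [Submodule.coe_sub, Submodule.coe_add, lmulJ_coe, map_sub]
  rw [mul_assoc r r' a, mul_assoc r r' (((π' a : ↥(idealSq k R I)) : R))]
  abel

lemma DQ_add (r r' : R) :
    DQ k R I hleft π' hπ (r + r') = DQ k R I hleft π' hπ r + DQ k R I hleft π' hπ r' := by
  apply Submodule.linearMap_qext
  apply LinearMap.ext; intro a
  simp only [LinearMap.comp_apply, Submodule.mkQ_apply, LinearMap.add_apply, DQ_mk]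
  apply Subtype.ext
  simp only [Submodule.coe_sub, Submodule.coe_add, lmulJ_coe, add_mul, map_add]
  abel

lemma DQ_ksmul (c : k) (r : R) :
    DQ k R I hleft π' hπ (c • r) = c • DQ k R I hleft π' hπ r := by
  apply Submodule.linearMap_qext
  apply LinearMap.ext; intro a
  simp only [LinearMap.comp_apply, Submodule.mkQ_apply, LinearMap.smul_apply, DQ_mk]
  apply Subtype.ext
  simp only [Submodule.coe_sub, SetLike.val_smul, lmulJ_coe, smul_mul_assoc, map_smul,
    smul_sub]

end Concrete

end QFA


/-- If `R` is quasi-free and `I ⊆ R` is a two-sided ideal,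
then the multiplication map `m : I ⊗ₖ I → I²` admits an `I`-linear splitting
`s : I² → I ⊗ₖ I`: one has `m ∘ s = id` on `I²`, and
`s (a * x) = (a ⊗ 1) • s x` for all `a ∈ I`, `x ∈ I²`, where `I` acts on
`I ⊗ₖ I` by `a • (x ⊗ y) = (a * x) ⊗ y`. -/
theorem ideal_mul_split_of_isQuasiFree (hR : IsQuasiFree k R)
    (I : Submodule k R)
    (hleft : ∀ (r x : R), x ∈ I → r * x ∈ I)
    (hright : ∀ (r x : R), x ∈ I → x * r ∈ I) :
    ∃ s : (idealSq k R I) →ₗ[k] (I ⊗[k] I),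
      (∀ z : idealSq k R I, mulII k R I (s z) = z) ∧
      (∀ (a : I) (x : idealSq k R I),
        s ⟨(a : R) * (x : R), smul_mem_idealSq k R hleft a.2 x.2⟩
          = LinearMap.rTensor (↥I) (mulL k R hleft a) (s x)) := by
  classical
  by_cases h1 : (1 : R) ∈ idealSq k R I
  · -- degenerate case : `1 ∈ I²`, use `s z = z ⊗ 1`.
    have h1I : (1 : R) ∈ I := idealSq_le k R hleft h1
    refine ⟨((TensorProduct.mk k ↥I ↥I).flip ⟨1, h1I⟩) ∘ₗ
        Submodule.inclusion (idealSq_le k R hleft), ?_, ?_⟩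
    · intro z
      show mulII k R I
        ((Submodule.inclusion (idealSq_le k R hleft) z) ⊗ₜ[k] (⟨1, h1I⟩ : ↥I)) = z
      rw [QFA.mulII_tmul]
      apply Subtype.ext
      show ((Submodule.inclusion (idealSq_le k R hleft) z : ↥I) : R) * 1 = (z : R)
      rw [mul_one]
      rfl
    · intro a x
      show (Submodule.inclusion (idealSq_le k R hleft)
          (⟨(a : R) * (x : R), smul_mem_idealSq k R hleft a.2 x.2⟩ : ↥(idealSq k R I)))
            ⊗ₜ[k] (⟨1, h1I⟩ : ↥I)
        = LinearMap.rTensor (↥I) (mulL k R hleft a)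
            ((Submodule.inclusion (idealSq_le k R hleft) x) ⊗ₜ[k] (⟨1, h1I⟩ : ↥I))
      rw [LinearMap.rTensor_tmul]
      rfl
  · -- main case
    -- build the linear projection π' onto I² killing 1
    obtain ⟨D0, hD0⟩ :=
      Submodule.exists_isCompl (idealSq k R I ⊔ Submodule.span k {(1 : R)})
    have hdis : Disjoint (idealSq k R I) (Submodule.span k {(1 : R)} ⊔ D0) := by
      rw [Submodule.disjoint_def]
      intro x hxJ hxC
      obtain ⟨sc, hsc, d, hd, hsum⟩ := Submodule.mem_sup.1 hxC
      have hdval : d = x - sc := by rw [← hsum]; abel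
      have hdP : d ∈ idealSq k R I ⊔ Submodule.span k {(1 : R)} := by
        rw [hdval]
        exact Submodule.sub_mem _ (Submodule.mem_sup_left hxJ) (Submodule.mem_sup_right hsc)
      have hd0 : d = 0 := (Submodule.disjoint_def.1 hD0.disjoint) d hdP hd
      obtain ⟨c, hc⟩ := Submodule.mem_span_singleton.1 hsc
      by_cases hc0 : c = 0
      · rw [← hsum, hd0, ← hc, hc0, zero_smul, add_zero]
      · exfalso
        apply h1
        have hx' : x = c • (1 : R) := by rw [← hsum, hd0, add_zero, ← hc]
        have h1x : (1 : R) = c⁻¹ • x := by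
          rw [hx', smul_smul, inv_mul_cancel₀ hc0, one_smul]
        rw [h1x]
        exact Submodule.smul_mem _ _ hxJ
    have hcod : Codisjoint (idealSq k R I) (Submodule.span k {(1 : R)} ⊔ D0) := by
      rw [codisjoint_iff, ← sup_assoc]
      exact hD0.codisjoint.eq_top
    have hcompl : IsCompl (idealSq k R I) (Submodule.span k {(1 : R)} ⊔ D0) := ⟨hdis, hcod⟩
    set π' : R →ₗ[k] ↥(idealSq k R I) :=
      Submodule.linearProjOfIsCompl _ _ hcompl with hπ'def
    have hπ : ∀ (z : R) (hz : z ∈ idealSq k R I), π' z = ⟨z, hz⟩ := fun z hz =>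
      Submodule.linearProjOfIsCompl_apply_left hcompl ⟨z, hz⟩
    have h1C : (1 : R) ∈ Submodule.span k {(1 : R)} ⊔ D0 :=
      Submodule.mem_sup_left (Submodule.mem_span_singleton_self 1)
    have hπ1 : π' 1 = 0 :=
      Submodule.projectionOnto_apply_of_mem_right hcompl h1C
    -- apply quasi-freeness (packaged)
    obtain ⟨σ₀, hσ₀⟩ :=
      (mulII k R I).exists_rightInverse_of_surjective (QFA.mulII_range k R I)
    obtain ⟨sf, hsf1, hsf2, hsf3, hsf4⟩ :=
      QFA.sfun_exists (QFA.actX k R I hleft) (QFA.actT k R I hleft) (QFA.actJ k R I hleft)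
        (mulII k R I) (QFA.mulII_intertwine k R I hleft) σ₀ hσ₀
        (QFA.DQ k R I hleft π' hπ) (QFA.DQ_one k R I hleft π' hπ)
        (QFA.DQ_mul k R I hleft π' hπ) (QFA.DQ_add k R I hleft π' hπ)
        (QFA.DQ_ksmul k R I hleft π' hπ) hR
    set x₁ : R ⧸ idealSq k R I := Submodule.Quotient.mk 1 with hx₁
    refine ⟨{ toFun := fun z => sf (z : R) x₁
              map_add' := by
                intro z w
                show sf ((z + w : ↥(idealSq k R I)) : R) x₁ = sf (z : R) x₁ + sf (w : R) x₁
                rw [Submodule.coe_add, hsf3, LinearMap.add_apply]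
              map_smul' := by
                intro c z
                show sf ((c • z : ↥(idealSq k R I)) : R) x₁ = (RingHom.id k) c • sf (z : R) x₁
                rw [SetLike.val_smul, hsf4, LinearMap.smul_apply, RingHom.id_apply] }, ?_, ?_⟩
    · intro z
      show mulII k R I (sf (z : R) x₁) = z
      have h := LinearMap.congr_fun (hsf1 (z : R)) x₁
      rw [LinearMap.comp_apply] at h
      rw [h, hx₁, QFA.DQ_mk, mul_one, hπ (z : R) z.2, hπ1, map_zero, sub_zero]
    · intro a x
      show sf ((a : R) * (x : R)) x₁ = _
      rw [hsf2, LinearMap.add_apply, LinearMap.comp_apply, LinearMap.comp_apply]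
      have h1x : (QFA.actX k R I hleft).act (x : R) x₁ = 0 := by
        rw [hx₁, QFA.actX_mk, mul_one]
        exact (Submodule.Quotient.mk_eq_zero _).2 x.2
      rw [h1x, map_zero, add_zero]
      show (QFA.actT k R I hleft).act (a : R) (sf (x : R) x₁) = _
      rw [QFA.actT_act]
      rfl
end
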